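/- arXiv:math/0505627 — 2 statements merged into one kernel-verified Lean document; each statement's English description precedes it below -/
import Mathlib

section
/- If T ⊂ S^1 forms a wandering N-gon under f(z) = z^d (d ≥ 2, N ≥ 3), then there exists at least one critical leaf, i.e., a critical chord that is the limit (in Hausdorff metric) of edges of a subsequence of the polygons CH(T_i). -/
open MeasureTheory Set Metric Filter Topology

noncomputable section

abbrev S1 := AddCircle (1 : ℝ)

def fd (d : ℕ) : S1 → S1 := fun x => d • x

def len (A : Set S1) : ℝ := (volume A).toReal

def IsHole (B H : Set S1) : Prop := ∃ x ∈ Bᶜ, H = connectedComponentIn Bᶜ x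

def openArc (u w : S1) : Set S1 := {x | SBtw.sbtw u x w}

def OrientPresOn (g : S1 → S1) (B : Set S1) : Prop :=
  Set.InjOn g B ∧ ∀ a ∈ B, ∀ b ∈ B, ∀ c ∈ B, SBtw.sbtw a b c → SBtw.sbtw (g a) (g b) (g c)

def emb (x : S1) : ℂ := (AddCircle.toCircle x : ℂ)

def chord (a b : S1) : Set ℂ := segment ℝ (emb a) (emb b)

def CH (A : Set S1) : Set ℂ := convexHull ℝ (emb '' A)

def Wandering (d N : ℕ) (T : Set S1) : Prop :=
  ∀ i j : ℕ, ((fd d)^[i] '' T).ncard = N ∧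
    (i ≠ j → Disjoint (CH ((fd d)^[i] '' T)) (CH ((fd d)^[j] '' T)))

def IsHoleEnum (B : Set S1) {N : ℕ} (H : Fin N → Set S1) : Prop :=
  Function.Injective H ∧ (∀ k, IsHole B (H k)) ∧ (∀ G, IsHole B G → ∃ k, H k = G) ∧
  ∀ k l : Fin N, k ≤ l → len (H k) ≤ len (H l)

def rem (d : ℕ) (s : ℝ) : ℝ := s - (⌊(d : ℝ) * s⌋ : ℝ) / d

def ImageHoleRel (g : S1 → S1) (H K : Set S1) : Prop :=
  ∃ u w : S1, u ≠ w ∧ H = openArc u w ∧ K = openArc (g u) (g w)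

def InLimitSet (d : ℕ) (T : Set S1) (a b : S1) : Prop :=
  ∃ φ : ℕ → ℕ, StrictMono φ ∧ ∃ u v : ℕ → S1,
    (∀ n, u n ∈ (fd d)^[φ n] '' T ∧ v n ∈ (fd d)^[φ n] '' T) ∧
    Tendsto (fun n => hausdorffDist (chord (u n) (v n)) (chord a b)) atTop (nhds 0)

open Real

lemma coe_int_eq_zero (n : ℤ) : ((n : ℝ) : S1) = 0 := by
  rw [AddCircle.coe_eq_zero_iff]; exact ⟨n, by simp⟩

lemma coe_sub_int (r : ℝ) (n : ℤ) : ((r - n : ℝ) : S1) = (r : S1) := by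
  have h : ((r - n : ℝ) : S1) = (r : S1) - ((n : ℝ) : S1) := QuotientAddGroup.mk_sub _ r n
  rw [h, coe_int_eq_zero, sub_zero]

lemma norm_coe_round (s : ℝ) : ‖((s : ℝ) : S1)‖ = |s - round s| := by
  calc ‖((s : ℝ) : S1)‖ = |s - (round ((1:ℝ)⁻¹ * s) : ℤ) * 1| := AddCircle.norm_eq 1
    _ = |s - round s| := by norm_num

lemma norm_coe_le_abs (r : ℝ) : ‖((r : ℝ) : S1)‖ ≤ |r| := by
  rcases le_or_gt (1/2) |r| with h | h
  · exact (norm_coe_round r).le.trans ((abs_sub_round r).trans h)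
  · have hr : round r = 0 := by
      rw [round_eq_zero_iff]
      have := abs_lt.mp h
      constructor
      · linarith [this.1]
      · linarith [this.2]
    rw [norm_coe_round r, hr]; norm_num

lemma exists_good_rep (t : S1) : ∃ r : ℝ, t = (r : S1) ∧ |r| = ‖t‖ ∧ |r| ≤ 1/2 := by
  induction t using QuotientAddGroup.induction_on with
  | H s =>
    refine ⟨s - round s, (coe_sub_int s (round s)).symm, ?_, abs_sub_round s⟩
    rw [norm_coe_round s]

lemma norm_pos_of_ne_zero {t : S1} (h : t ≠ 0) : 0 < ‖t‖ := by
  rcases (norm_nonneg t).lt_or_eq with h' | h'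
  · exact h'
  · exact absurd (norm_eq_zero.mp h'.symm) h

lemma norm_le_half (t : S1) : ‖t‖ ≤ 1/2 := by
  obtain ⟨r, rfl, h1, h2⟩ := exists_good_rep t
  rw [← h1]; exact h2

/-- Key expansion lemma -/

lemma coe_smul (d : ℕ) (r : ℝ) : (d : ℕ) • ((r:ℝ) : S1) = (((d:ℝ) * r : ℝ) : S1) := by
  rw [← QuotientAddGroup.mk_nsmul]; norm_num [nsmul_eq_mul]

lemma key_expand (d : ℕ) (hd : 2 ≤ d) (ε : ℝ) (t : S1)
    (havoid : ∀ k : ℕ, 1 ≤ k → k < d → ε ≤ ‖t - (((k : ℝ)/(d : ℝ) : ℝ) : S1)‖) :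
    (d : ℝ) * min ‖t‖ ε ≤ ‖d • t‖ := by
  obtain ⟨r, rfl, h1, h2⟩ := exists_good_rep t
  have hdpos : (0:ℝ) < d := by positivity
  have hdz : (d:ℤ) ≠ 0 := by positivity
  rw [coe_smul, norm_coe_round ((d:ℝ)*r)]
  set m : ℤ := round ((d:ℝ)*r) with hm
  set k0 : ℤ := m % (d:ℤ) with hk0
  set q : ℤ := m / (d:ℤ) with hq
  have hmk : m = (d:ℤ) * q + k0 := (Int.mul_ediv_add_emod m d).symm
  have hk0nn : 0 ≤ k0 := Int.emod_nonneg m hdz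
  have hk0lt : k0 < (d:ℤ) := Int.emod_lt_of_pos m (by positivity)
  have key : ‖((r:ℝ):S1) - (((k0:ℝ)/(d:ℝ) : ℝ) : S1)‖ ≤ |(d:ℝ)*r - m| / d := by
    have e1 : ((r:ℝ):S1) - (((k0:ℝ)/(d:ℝ) : ℝ) : S1) = ((r - (k0:ℝ)/(d:ℝ) : ℝ) : S1) := by
      rw [QuotientAddGroup.mk_sub]
    have e2 : ((r - (k0:ℝ)/(d:ℝ) : ℝ) : S1) = ((r - (k0:ℝ)/(d:ℝ) - q : ℝ) : S1) :=
      (coe_sub_int _ q).symm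
    rw [e1, e2]
    have e3 : r - (k0:ℝ)/(d:ℝ) - q = ((d:ℝ)*r - m)/d := by
      have : ((m:ℝ)) = (d:ℝ)*(q:ℝ) + (k0:ℝ) := by exact_mod_cast congrArg (Int.cast : ℤ → ℝ) hmk
      field_simp [this]; rw [this]; ring
    rw [e3]
    calc ‖((((d:ℝ)*r - m)/d : ℝ) : S1)‖ ≤ |((d:ℝ)*r - m)/d| := norm_coe_le_abs _
      _ = |(d:ℝ)*r - m| / d := by rw [abs_div, abs_of_pos hdpos]
  rcases eq_or_lt_of_le hk0nn with hz | hpos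
  · -- k0 = 0
    have : ‖((r:ℝ):S1)‖ ≤ |(d:ℝ)*r - m| / d := by
      have := key
      rw [← hz] at this
      simpa using this
    have h3 : (d:ℝ) * min ‖((r:ℝ):S1)‖ ε ≤ (d:ℝ) * ‖((r:ℝ):S1)‖ :=
      mul_le_mul_of_nonneg_left (min_le_left _ _) hdpos.le
    calc (d:ℝ) * min ‖((r:ℝ):S1)‖ ε ≤ (d:ℝ) * ‖((r:ℝ):S1)‖ := h3
      _ ≤ (d:ℝ) * (|(d:ℝ)*r - m| / d) := mul_le_mul_of_nonneg_left this hdpos.le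
      _ = |(d:ℝ)*r - m| := by field_simp
  · -- 1 ≤ k0 < d
    have hk1 : 1 ≤ k0.toNat := by omega
    have hk2 : k0.toNat < d := by omega
    have hcast : ((k0.toNat : ℕ) : ℝ) = (k0 : ℝ) := by
      exact_mod_cast congrArg (Int.cast : ℤ → ℝ) (Int.toNat_of_nonneg hk0nn)
    have := havoid k0.toNat hk1 hk2
    rw [hcast] at this
    have h4 : ε ≤ |(d:ℝ)*r - m| / d := this.trans key
    calc (d:ℝ) * min ‖((r:ℝ):S1)‖ ε ≤ (d:ℝ) * ε :=
      mul_le_mul_of_nonneg_left (min_le_right _ _) hdpos.le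
      _ ≤ (d:ℝ) * (|(d:ℝ)*r - m| / d) := mul_le_mul_of_nonneg_left h4 hdpos.le
      _ = |(d:ℝ)*r - m| := by field_simp


lemma growth (d : ℕ) (hd : 2 ≤ d) (ε : ℝ) (hε : 0 < ε) (δ : ℕ → S1)
    (hrec : ∀ i, δ (i+1) = d • δ i) (hne : δ 0 ≠ 0)
    (hav : ∀ i, ∀ k : ℕ, 1 ≤ k → k < d → ε ≤ ‖δ i - (((k : ℝ)/(d : ℝ) : ℝ) : S1)‖) :
    ∃ I, ∀ i, I ≤ i → ε ≤ ‖δ i‖ := by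
  have hd1 : (1:ℝ) ≤ (d:ℝ) := by exact_mod_cast Nat.one_le_of_lt hd
  have hstep : ∀ i, (d:ℝ) * min ‖δ i‖ ε ≤ ‖δ (i+1)‖ := by
    intro i; rw [hrec i]; exact key_expand d hd ε (δ i) (hav i)
  have h0 : 0 < ‖δ 0‖ := norm_pos_of_ne_zero hne
  have hI : ∃ I, ε ≤ ‖δ I‖ := by
    by_contra hcon
    push_neg at hcon
    have hgrow : ∀ i, (2:ℝ)^i * ‖δ 0‖ ≤ ‖δ i‖ := by
      intro i
      induction i with
      | zero => simp
      | succ n ih =>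
        have hmin : min ‖δ n‖ ε = ‖δ n‖ := min_eq_left (hcon n).le
        have := hstep n
        rw [hmin] at this
        have h2d : (2:ℝ) ≤ (d:ℝ) := by exact_mod_cast hd
        calc (2:ℝ)^(n+1) * ‖δ 0‖ = 2 * ((2:ℝ)^n * ‖δ 0‖) := by ring
          _ ≤ 2 * ‖δ n‖ := by nlinarith [norm_nonneg (δ n)]
          _ ≤ (d:ℝ) * ‖δ n‖ := by nlinarith [norm_nonneg (δ n)]
          _ ≤ ‖δ (n+1)‖ := this
    obtain ⟨n, hn⟩ := pow_unbounded_of_one_lt (ε / ‖δ 0‖) (by norm_num : (1:ℝ) < 2)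
    have : ε < ‖δ n‖ := by
      have := hgrow n
      have h' : ε / ‖δ 0‖ * ‖δ 0‖ < 2^n * ‖δ 0‖ := by
        exact mul_lt_mul_of_pos_right hn h0
      rw [div_mul_cancel₀ _ h0.ne'] at h'
      linarith
    exact absurd this (not_lt.mpr (hcon n).le)
  obtain ⟨I, hI⟩ := hI
  refine ⟨I, ?_⟩
  intro i hi
  induction i with
  | zero => simpa [Nat.le_zero.mp hi] using hI
  | succ n ih =>
    rcases Nat.lt_or_ge I (n+1) with h | h
    · have hn := ih (Nat.lt_succ_iff.mp h)
      have hmin : min ‖δ n‖ ε = ε := min_eq_right hn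
      have := hstep n
      rw [hmin] at this
      nlinarith
    · have : I = n + 1 := le_antisymm hi h
      rw [← this]; exact hI


lemma emb_norm_one (x : S1) : ‖emb x‖ = 1 := Circle.norm_coe _

lemma emb_continuous : Continuous emb :=
  continuous_subtype_val.comp AddCircle.continuous_toCircle

set_option maxHeartbeats 1000000 in
lemma emb_dist_ge (ε : ℝ) (hε : 0 < ε) (x y : S1) (h : ε ≤ ‖x - y‖) :
    2 * Real.sin (π * ε) ≤ dist (emb x) (emb y) := by
  obtain ⟨w, hw, h1, h2⟩ := exists_good_rep (x - y)
  have hε2 : ε ≤ 1/2 := le_trans (h.trans (le_of_eq h1.symm)) h2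
  have hεw : ε ≤ |w| := by rw [h1]; exact h
  have hxy : emb x = emb (x - y) * emb y := by
    unfold emb
    rw [← Circle.coe_mul, ← AddCircle.toCircle_add, sub_add_cancel]
  have key : dist (emb x) (emb y) = ‖emb (x - y) - 1‖ := by
    rw [dist_eq_norm, hxy]
    have : emb (x-y) * emb y - emb y = (emb (x-y) - 1) * emb y := by ring
    rw [this, norm_mul, emb_norm_one, mul_one]
  rw [key]
  -- emb (x - y) = exp (2πw i)
  have hembw : emb (x - y) = Complex.exp ((2 * π * w : ℝ) * Complex.I) := by
    rw [hw]
    unfold emb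
    rw [AddCircle.toCircle_apply_mk, Circle.coe_exp]
    norm_num
  rw [hembw]
  set θ : ℝ := 2 * π * w with hθ
  have hre : (Complex.exp ((θ:ℝ) * Complex.I) - 1).re = Real.cos θ - 1 := by
    rw [Complex.sub_re, Complex.exp_ofReal_mul_I_re, Complex.one_re]
  have him : (Complex.exp ((θ:ℝ) * Complex.I) - 1).im = Real.sin θ := by
    rw [Complex.sub_im, Complex.exp_ofReal_mul_I_im, Complex.one_im]; ring
  rw [Complex.norm_def, Complex.normSq_apply, hre, him]
  have hid : (Real.cos θ - 1) * (Real.cos θ - 1) + Real.sin θ * Real.sin θ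
      = 4 * Real.sin (π * w) ^ 2 := by
    have e1 : θ = 2 * (π * w) := by rw [hθ]; ring
    have e2 : Real.cos θ = 2 * Real.cos (π * w) ^ 2 - 1 := by rw [e1, Real.cos_two_mul]
    have e3 : Real.sin θ = 2 * Real.sin (π * w) * Real.cos (π * w) := by
      rw [e1, Real.sin_two_mul]
    have e4 := Real.sin_sq_add_cos_sq (π * w)
    rw [e2, e3]
    linear_combination (4 * Real.cos (π * w)^2 - 4) * e4
  rw [hid]
  -- sin (π ε) ≤ |sin (π w)|
  have hwhalf : |w| ≤ 1/2 := h2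
  have hsinpos : 0 ≤ Real.sin (π * ε) := by
    apply Real.sin_nonneg_of_nonneg_of_le_pi
    · positivity
    · nlinarith [Real.pi_pos]
  have hmono : Real.sin (π * ε) ≤ Real.sin (π * |w|) := by
    apply Real.strictMonoOn_sin.monotoneOn
    · constructor <;> nlinarith [Real.pi_pos]
    · constructor <;> nlinarith [Real.pi_pos, abs_nonneg w]
    · nlinarith [Real.pi_pos]
  have habs : Real.sin (π * |w|) = |Real.sin (π * w)| := by
    rcases abs_cases w with ⟨hc, hpos⟩ | ⟨hc, hneg⟩
    · rw [hc, abs_of_nonneg]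
      apply Real.sin_nonneg_of_nonneg_of_le_pi
      · nlinarith [Real.pi_pos]
      · have : w ≤ 1/2 := by rw [← hc]; exact hwhalf
        nlinarith [Real.pi_pos]
    · rw [hc]
      have heq : π * -w = -(π * w) := by ring
      rw [heq, Real.sin_neg, abs_of_nonpos]
      apply Real.sin_nonpos_of_nonpos_of_neg_pi_le
      · nlinarith [Real.pi_pos]
      · have : -w ≤ 1/2 := by rw [← hc]; exact hwhalf
        nlinarith [Real.pi_pos]
  have hfinal : (2 * Real.sin (π * ε))^2 ≤ 4 * Real.sin (π * w) ^ 2 := by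
    have h5 : Real.sin (π * ε) ≤ |Real.sin (π * w)| := by rw [← habs]; exact hmono
    nlinarith [abs_nonneg (Real.sin (π * w)), sq_abs (Real.sin (π * w))]
  have hnn : 0 ≤ 2 * Real.sin (π * ε) := by linarith
  calc 2 * Real.sin (π * ε) = Real.sqrt ((2 * Real.sin (π * ε))^2) := (Real.sqrt_sq hnn).symm
    _ ≤ Real.sqrt (4 * Real.sin (π * w) ^ 2) := Real.sqrt_le_sqrt hfinal


lemma hausdorff_segment (p q p' q' : ℂ) :
    hausdorffDist (segment ℝ p q) (segment ℝ p' q') ≤ max (dist p p') (dist q q') := by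
  have hmain : ∀ (a b a' b' : ℂ), ∀ z ∈ segment ℝ a b,
      ∃ z' ∈ segment ℝ a' b', dist z z' ≤ max (dist a a') (dist b b') := by
    intro a b a' b' z hz
    obtain ⟨s, t, hs, ht, hst, rfl⟩ := hz
    refine ⟨s • a' + t • b', ⟨s, t, hs, ht, hst, rfl⟩, ?_⟩
    have : (s • a + t • b) - (s • a' + t • b') = s • (a - a') + t • (b - b') := by
      simp [smul_sub]; ring
    rw [dist_eq_norm, this]
    calc ‖s • (a - a') + t • (b - b')‖ ≤ ‖s • (a - a')‖ + ‖t • (b - b')‖ := norm_add_le _ _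
      _ = s * ‖a - a'‖ + t * ‖b - b'‖ := by
          rw [norm_smul, norm_smul, Real.norm_eq_abs, Real.norm_eq_abs, abs_of_nonneg hs,
            abs_of_nonneg ht]
      _ ≤ s * max (dist a a') (dist b b') + t * max (dist a a') (dist b b') := by
          gcongr
          · rw [← dist_eq_norm]; exact le_max_left _ _
          · rw [← dist_eq_norm]; exact le_max_right _ _
      _ = max (dist a a') (dist b b') := by rw [← add_mul, hst, one_mul]
  apply Metric.hausdorffDist_le_of_mem_dist
  · exact le_max_iff.mpr (Or.inl dist_nonneg)
  · exact hmain p q p' q'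
  · intro z hz
    obtain ⟨z', hz', hd⟩ := hmain p' q' p q z hz
    refine ⟨z', hz', ?_⟩
    rw [dist_comm p p', dist_comm q q']
    exact hd


/-- The determinant identity for points on the unit circle. -/
lemma det_identity (A B C : ℂ) (hA : ‖A‖ = 1) (hB : ‖B‖ = 1)
    (hC : ‖C‖ = 1) :
    |(B-A).re*(C-A).im - (B-A).im*(C-A).re|
      = ‖B-A‖ * ‖C-A‖ * ‖B-C‖ / 2 := by
  have hA0 : A ≠ 0 := by intro h; rw [h] at hA; simp at hA
  have hB0 : B ≠ 0 := by intro h; rw [h] at hB; simp at hB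
  have hC0 : C ≠ 0 := by intro h; rw [h] at hC; simp at hC
  set ζ : ℂ := (starRingEnd ℂ) (B-A) * (C-A) with hζ
  have h1 : (B-A).re*(C-A).im - (B-A).im*(C-A).re = ζ.im := by
    simp [hζ, Complex.mul_im]; ring
  have hcA : (starRingEnd ℂ) A = A⁻¹ := (Complex.inv_eq_conj (by exact hA)).symm
  have hcB : (starRingEnd ℂ) B = B⁻¹ := (Complex.inv_eq_conj (by exact hB)).symm
  have hcC : (starRingEnd ℂ) C = C⁻¹ := (Complex.inv_eq_conj (by exact hC)).symm
  have haA : (starRingEnd ℂ) A * A = 1 := by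
    rw [mul_comm, Complex.mul_conj, Complex.normSq_eq_norm_sq, hA]; norm_num
  have hbB : (starRingEnd ℂ) B * B = 1 := by
    rw [mul_comm, Complex.mul_conj, Complex.normSq_eq_norm_sq, hB]; norm_num
  have hcC' : (starRingEnd ℂ) C * C = 1 := by
    rw [mul_comm, Complex.mul_conj, Complex.normSq_eq_norm_sq, hC]; norm_num
  have hABC : A * B * C ≠ 0 := by
    exact mul_ne_zero (mul_ne_zero hA0 hB0) hC0
  have hkey : (ζ - (starRingEnd ℂ) ζ) * (A*B*C) = (A-B)*(C-A)*(C-B) := by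
    have hconj : (starRingEnd ℂ) ζ = (B-A) * ((starRingEnd ℂ) C - (starRingEnd ℂ) A) := by
      rw [hζ, map_mul, Complex.conj_conj, map_sub]
    have hζ' : ζ = ((starRingEnd ℂ) B - (starRingEnd ℂ) A) * (C-A) := by
      rw [hζ, map_sub]
    rw [hconj, hζ']
    set a := (starRingEnd ℂ) A
    set b := (starRingEnd ℂ) B
    set c := (starRingEnd ℂ) C
    linear_combination ((C-A)*A*C)*hbB - ((C-A)*B*C)*haA - ((B-A)*A*B)*hcC' + ((B-A)*B*C)*haA
  have h3 : ζ - (starRingEnd ℂ) ζ = (A-B)*(C-A)*(C-B)/(A*B*C) := by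
    rw [eq_div_iff hABC]; exact hkey
  have h4 : ‖ζ - (starRingEnd ℂ) ζ‖
      = ‖B-A‖ * ‖C-A‖ * ‖B-C‖ := by
    rw [h3, norm_div, norm_mul, norm_mul, norm_mul, norm_mul, hA, hB, hC]
    rw [norm_sub_rev A B]
    rw [norm_sub_rev C B]
    norm_num
  have h5 : ζ - (starRingEnd ℂ) ζ = ((2 * ζ.im : ℝ) : ℂ) * Complex.I := Complex.sub_conj ζ
  rw [h5] at h4
  rw [norm_mul, Complex.norm_real, Complex.norm_I, mul_one, Real.norm_eq_abs] at h4
  rw [h1]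
  rw [abs_mul, abs_two] at h4  -- |2 * ζ.im| = 2 * |ζ.im|?
  linarith [h4]


lemma square_subset_triangle :
    {z : ℂ | z.re ∈ Set.Icc (0:ℝ) (1/2) ∧ z.im ∈ Set.Icc (0:ℝ) (1/2)}
      ⊆ convexHull ℝ ({0, 1, Complex.I} : Set ℂ) := by
  intro z hz
  obtain ⟨⟨hre0, hre1⟩, ⟨him0, him1⟩⟩ := hz
  have hsum : z.re + z.im ≤ 1 := by linarith
  have hmem := Finset.centerMass_mem_convexHull (s := ({0, 1, Complex.I} : Set ℂ))
    (Finset.univ : Finset (Fin 3))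
    (w := ![1 - z.re - z.im, z.re, z.im]) (z := ![0, 1, Complex.I])
    (by intro i _; fin_cases i <;> simp <;> linarith)
    (by rw [Fin.sum_univ_three]; simp; linarith)
    (by intro i _; fin_cases i <;> simp)
  have hcm : (Finset.univ : Finset (Fin 3)).centerMass ![1 - z.re - z.im, z.re, z.im]
      ![0, 1, Complex.I] = z := by
    rw [Finset.centerMass, Fin.sum_univ_three, Fin.sum_univ_three]
    simp only [Matrix.cons_val_zero, Matrix.cons_val_one, Matrix.head_cons,
      Matrix.cons_val_two, Matrix.tail_cons]
    rw [show (1 - z.re - z.im) + z.re + z.im = 1 by ring]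
    rw [inv_one, one_smul, smul_zero, zero_add]
    simp [Complex.real_smul]
  rwa [hcm] at hmem

lemma square_vol : volume {z : ℂ | z.re ∈ Set.Icc (0:ℝ) (1/2) ∧ z.im ∈ Set.Icc (0:ℝ) (1/2)}
    = ENNReal.ofReal (1/4) := by
  have h : {z : ℂ | z.re ∈ Set.Icc (0:ℝ) (1/2) ∧ z.im ∈ Set.Icc (0:ℝ) (1/2)}
      = Complex.measurableEquivRealProd ⁻¹' (Set.Icc (0:ℝ) (1/2) ×ˢ Set.Icc (0:ℝ) (1/2)) := by
    ext z
    simp only [Set.mem_setOf_eq, Set.mem_preimage, Complex.measurableEquivRealProd_apply,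
      Set.mem_prod_eq]
  rw [h, Complex.volume_preserving_equiv_real_prod.measure_preimage]
  · rw [show (volume : Measure (ℝ × ℝ)) = (volume : Measure ℝ).prod volume from
      Measure.volume_eq_prod ℝ ℝ]
    rw [Measure.prod_prod, Real.volume_Icc]
    rw [← ENNReal.ofReal_mul (by norm_num)]
    norm_num
  · exact ((measurableSet_Icc).prod (measurableSet_Icc)).nullMeasurableSet

lemma unit_triangle_vol_ge :
    ENNReal.ofReal (1/4) ≤ volume (convexHull ℝ ({0, 1, Complex.I} : Set ℂ)) := by
  rw [← square_vol]
  exact measure_mono square_subset_triangle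


lemma vol_triangle_eq (A B C : ℂ) :
    volume (convexHull ℝ ({A, B, C} : Set ℂ))
      = ENNReal.ofReal (|(B-A).re*(C-A).im - (B-A).im*(C-A).re|)
        * volume (convexHull ℝ ({0, 1, Complex.I} : Set ℂ)) := by
  set L : ℂ →ₗ[ℝ] ℂ := Complex.basisOneI.constr ℝ ![B - A, C - A] with hL
  have hb0 : Complex.basisOneI (0 : Fin 2) = 1 := by simp [Complex.coe_basisOneI]
  have hb1 : Complex.basisOneI (1 : Fin 2) = Complex.I := by simp [Complex.coe_basisOneI]
  have hL1 : L 1 = B - A := by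
    rw [← hb0, hL, Complex.basisOneI.constr_basis ℝ ![B - A, C - A] 0]
    rfl
  have hLI : L Complex.I = C - A := by
    rw [← hb1, hL, Complex.basisOneI.constr_basis ℝ ![B - A, C - A] 1]
    rfl
  -- affine map
  have himg : (fun z => A + L z) '' (convexHull ℝ ({0, 1, Complex.I} : Set ℂ))
      = convexHull ℝ ({A, B, C} : Set ℂ) := by
    have haff : ∃ φ : ℂ →ᵃ[ℝ] ℂ, ⇑φ = fun z => A + L z := by
      refine ⟨⟨fun z => A + L z, L, ?_⟩, rfl⟩
      intro p v
      simp [map_add]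
      ring
    obtain ⟨φ, hφ⟩ := haff
    rw [← hφ, AffineMap.image_convexHull, hφ]
    congr 1
    rw [Set.image_insert_eq, Set.image_insert_eq, Set.image_singleton]
    simp [hL1, hLI]
  -- measure computation
  rw [← himg]
  have hcomp : (fun z => A + L z) '' (convexHull ℝ ({0, 1, Complex.I} : Set ℂ))
      = (fun z => A + z) '' (⇑L '' (convexHull ℝ ({0, 1, Complex.I} : Set ℂ))) := by
    rw [Set.image_image]
  rw [hcomp]
  have htrans : ∀ s : Set ℂ, volume ((fun z => A + z) '' s) = volume s := by
    intro s
    have : (fun z => A + z) '' s = (fun z => -A + z) ⁻¹' s := by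
      ext z
      constructor
      · rintro ⟨w, hw, rfl⟩
        show -A + (A + w) ∈ s
        simpa using hw
      · intro h
        exact ⟨-A + z, h, by ring⟩
    rw [this, measure_preimage_add]
  rw [htrans, Measure.addHaar_image_linearMap]
  congr 2
  -- det computation
  rw [← LinearMap.det_toMatrix Complex.basisOneI L, Matrix.det_fin_two]
  have e00 : (LinearMap.toMatrix Complex.basisOneI Complex.basisOneI L) 0 0 = (B-A).re := by
    rw [LinearMap.toMatrix_apply]
    simp [Complex.coe_basisOneI, hL1, Complex.coe_basisOneI_repr]
  have e10 : (LinearMap.toMatrix Complex.basisOneI Complex.basisOneI L) 1 0 = (B-A).im := by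
    rw [LinearMap.toMatrix_apply]
    simp [Complex.coe_basisOneI, hL1, Complex.coe_basisOneI_repr]
  have e01 : (LinearMap.toMatrix Complex.basisOneI Complex.basisOneI L) 0 1 = (C-A).re := by
    rw [LinearMap.toMatrix_apply]
    simp [Complex.coe_basisOneI, hLI, Complex.coe_basisOneI_repr]
  have e11 : (LinearMap.toMatrix Complex.basisOneI Complex.basisOneI L) 1 1 = (C-A).im := by
    rw [LinearMap.toMatrix_apply]
    simp [Complex.coe_basisOneI, hLI, Complex.coe_basisOneI_repr]
  rw [e00, e10, e01, e11]
  ring_nf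


lemma kd_ne_zero (d k : ℕ) (hd : 2 ≤ d) (hk1 : 1 ≤ k) (hk2 : k < d) :
    (((k:ℝ)/(d:ℝ) : ℝ) : S1) ≠ 0 := by
  intro h
  rw [AddCircle.coe_eq_zero_iff] at h
  obtain ⟨n, hn⟩ := h
  have hdpos : (0:ℝ) < d := by positivity
  have h1 : (n:ℝ) = (k:ℝ)/(d:ℝ) := by simpa using hn
  have h2 : (0:ℝ) < (k:ℝ)/(d:ℝ) := by positivity
  have h3 : (k:ℝ)/(d:ℝ) < 1 := by
    rw [div_lt_one hdpos]; exact_mod_cast hk2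
  have hn0 : 0 < n := by exact_mod_cast h1 ▸ h2
  have hn1 : (n:ℝ) < 1 := h1 ▸ h3
  have : (1:ℝ) ≤ (n:ℝ) := by exact_mod_cast hn0
  linarith

lemma smul_kd_eq_zero (d k : ℕ) (hd : 2 ≤ d) :
    (d:ℕ) • ((((k:ℕ):ℝ)/(d:ℝ) : ℝ) : S1) = 0 := by
  have hdne : (d:ℝ) ≠ 0 := by positivity
  rw [coe_smul]
  rw [show (d:ℝ) * ((k:ℝ)/(d:ℝ)) = ((k:ℤ):ℝ) by push_cast; field_simp]
  exact coe_int_eq_zero k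

/-- aux1 : from frequently-near-critical pairs, build the conclusion -/
lemma build_limit (d : ℕ) (hd : 2 ≤ d) (T : Set S1) (k : ℕ) (hk1 : 1 ≤ k) (hk2 : k < d)
    (hQ : ∀ n : ℕ, ∃ i, n ≤ i ∧ ∃ x ∈ (fd d)^[i] '' T, ∃ y ∈ (fd d)^[i] '' T,
      ‖(y - x) - (((k:ℝ)/(d:ℝ) : ℝ) : S1)‖ < 1/(n+1)) :
    ∃ a b : S1, a ≠ b ∧ fd d a = fd d b ∧ InLimitSet d T a b := by
  classical
  set κ : S1 := (((k:ℝ)/(d:ℝ) : ℝ) : S1) with hκ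
  -- a strictly monotone selection
  have hc : ∀ m : ℕ, (hQ m).choose ≥ m ∧ ∃ x ∈ (fd d)^[(hQ m).choose] '' T,
      ∃ y ∈ (fd d)^[(hQ m).choose] '' T, ‖(y - x) - κ‖ < 1/(m+1) := fun m => (hQ m).choose_spec
  let g : ℕ → ℕ := fun n => Nat.rec ((hQ 0).choose)
    (fun n ih => (hQ (max (n+1) (ih+1))).choose) n
  have hgsucc : ∀ n, g (n+1) = (hQ (max (n+1) (g n + 1))).choose := fun n => rfl
  have hgmono : StrictMono g := by
    apply strictMono_nat_of_lt_succ
    intro n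
    rw [hgsucc n]
    have := (hc (max (n+1) (g n + 1))).1
    omega
  have hgdata : ∀ n, ∃ x ∈ (fd d)^[g n] '' T, ∃ y ∈ (fd d)^[g n] '' T,
      ‖(y - x) - κ‖ < 1/(n+1) := by
    intro n
    cases n with
    | zero => exact (hc 0).2
    | succ m =>
      obtain ⟨x, hx, y, hy, hb⟩ := (hc (max (m+1) (g m + 1))).2
      rw [← hgsucc m] at hx hy
      refine ⟨x, hx, y, hy, lt_of_lt_of_le hb ?_⟩
      have hle : (m+1 : ℕ) ≤ max (m+1) (g m + 1) := le_max_left _ _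
      have hle' : ((m+1:ℕ):ℝ) ≤ ((max (m+1) (g m + 1) : ℕ):ℝ) := by exact_mod_cast hle
      apply one_div_le_one_div_of_le
      · positivity
      · push_cast at hle' ⊢; linarith
  -- choose the pairs
  choose u hu v hv huv using hgdata
  -- compactness
  obtain ⟨a, -, ψ, hψ, hconv⟩ := IsCompact.tendsto_subseq (isCompact_univ (X := S1))
    (fun n => Set.mem_univ (u n))
  set b : S1 := a + κ with hb
  have he : ∀ n, v n = u n + κ + ((v n - u n) - κ) := by intro n; abel
  have hetend : Tendsto (fun m => (v (ψ m) - u (ψ m)) - κ) atTop (nhds 0) := by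
    rw [tendsto_zero_iff_norm_tendsto_zero]
    apply squeeze_zero (fun m => norm_nonneg _) (fun m => (huv (ψ m)).le.trans ?_)
    · exact tendsto_one_div_add_atTop_nhds_zero_nat
    · apply one_div_le_one_div_of_le
      · positivity
      · have h3 : m ≤ ψ m := hψ.le_apply
        have h3' : ((m:ℕ):ℝ) ≤ ((ψ m : ℕ):ℝ) := by exact_mod_cast h3
        push_cast at h3' ⊢; linarith
  have hvconv : Tendsto (fun m => v (ψ m)) atTop (nhds b) := by
    have : (fun m => v (ψ m)) = fun m => (u (ψ m) + κ) + ((v (ψ m) - u (ψ m)) - κ) := by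
      funext m; rw [← he (ψ m)]
    rw [this, hb]
    have h1 : Tendsto (fun m => u (ψ m) + κ) atTop (nhds (a + κ)) :=
      (hconv.add tendsto_const_nhds)
    simpa using h1.add hetend
  -- conclusion
  refine ⟨a, b, ?_, ?_, ?_⟩
  · intro h
    rw [hb] at h
    have h0 : κ = 0 := by
      have h' := h.symm
      rwa [add_eq_left] at h'
    exact kd_ne_zero d k hd hk1 hk2 h0
  · rw [hb]
    show fd d a = fd d (a + κ)
    unfold fd
    rw [smul_add, hκ, smul_kd_eq_zero d k hd, add_zero]
  · refine ⟨g ∘ ψ, hgmono.comp hψ, fun m => u (ψ m), fun m => v (ψ m),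
      fun m => ⟨hu (ψ m), hv (ψ m)⟩, ?_⟩
    apply squeeze_zero (fun m => hausdorffDist_nonneg)
      (fun m => hausdorff_segment _ _ _ _)
    have h1 : Tendsto (fun m => dist (emb (u (ψ m))) (emb a)) atTop (nhds 0) := by
      rw [← tendsto_iff_dist_tendsto_zero]
      exact (emb_continuous.tendsto a).comp hconv
    have h2 : Tendsto (fun m => dist (emb (v (ψ m))) (emb b)) atTop (nhds 0) := by
      rw [← tendsto_iff_dist_tendsto_zero]
      exact (emb_continuous.tendsto b).comp hvconv
    have := h1.max h2
    simpa using this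


lemma pos_lb_of_finite (V : Set ℝ) (hfin : V.Finite) (hpos : ∀ v ∈ V, 0 < v) :
    ∃ ε : ℝ, 0 < ε ∧ ∀ v ∈ V, ε ≤ v := by
  rcases V.eq_empty_or_nonempty with rfl | hne
  · exact ⟨1, one_pos, fun v hv => absurd hv (Set.notMem_empty v)⟩
  · have hne' : hfin.toFinset.Nonempty := by
      rwa [Set.Finite.toFinset_nonempty]
    refine ⟨hfin.toFinset.min' hne', ?_, ?_⟩
    · have hm := hfin.toFinset.min'_mem hne'
      rw [Set.Finite.mem_toFinset] at hm
      exact hpos _ hm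
    · intro v hv
      exact hfin.toFinset.min'_le v (by rwa [Set.Finite.mem_toFinset])

section main
variable (d N : ℕ) (T : Set S1)

/-- per-time positive lower bound -/
lemma single_time_lb (hd : 2 ≤ d) (hN : 3 ≤ N)
    (hcard : ∀ i : ℕ, ((fd d)^[i] '' T).ncard = N) (i : ℕ) :
    ∃ ε : ℝ, 0 < ε ∧ ∀ x ∈ (fd d)^[i] '' T, ∀ y ∈ (fd d)^[i] '' T, ∀ k : ℕ,
      1 ≤ k → k < d → ε ≤ ‖(y - x) - (((k:ℝ)/(d:ℝ) : ℝ) : S1)‖ := by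
  classical
  have hfin : ∀ j : ℕ, ((fd d)^[j] '' T).Finite := by
    intro j
    by_contra h
    have h2 : ((fd d)^[j] '' T).Infinite := h
    have := h2.ncard
    rw [hcard j] at this
    omega
  have hinj : Set.InjOn (fd d) ((fd d)^[i] '' T) := by
    apply Set.injOn_of_ncard_image_eq _ (hfin i)
    have himg : fd d '' ((fd d)^[i] '' T) = (fd d)^[i+1] '' T := by
      rw [Function.iterate_succ', Set.image_comp]
    rw [himg, hcard, hcard]
  -- no exact critical pair
  have hne_pair : ∀ x ∈ (fd d)^[i] '' T, ∀ y ∈ (fd d)^[i] '' T, ∀ k : ℕ, 1 ≤ k → k < d →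
      (y - x) ≠ (((k:ℝ)/(d:ℝ) : ℝ) : S1) := by
    intro x hx y hy k hk1 hk2 heq
    have hfd : fd d y = fd d x := by
      have h1 : fd d y - fd d x = (d:ℕ) • (y - x) := by
        unfold fd; rw [smul_sub]
      rw [heq] at h1
      rw [smul_kd_eq_zero d k hd] at h1
      have := sub_eq_zero.mp h1
      exact this
    have hxy : y = x := hinj hy hx hfd
    rw [hxy] at heq
    simp at heq
    exact kd_ne_zero d k hd hk1 hk2 heq.symm
  -- finite set of values
  set W : Set ℝ := (fun q : (S1 × S1) × ℕ =>
      ‖(q.1.2 - q.1.1) - (((q.2:ℝ)/(d:ℝ) : ℝ) : S1)‖) ''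
      ((((fd d)^[i] '' T) ×ˢ ((fd d)^[i] '' T)) ×ˢ (↑(Finset.Ico 1 d) : Set ℕ)) with hW
  have hWfin : W.Finite :=
    Set.Finite.image _ (Set.Finite.prod ((hfin i).prod (hfin i)) (Finset.finite_toSet _))
  have hWpos : ∀ v ∈ W, 0 < v := by
    rintro v ⟨⟨⟨x, y⟩, k⟩, ⟨⟨hx, hy⟩, hk⟩, rfl⟩
    simp only [Finset.coe_Ico, Set.mem_Ico] at hk
    rw [norm_pos_iff]
    intro h0
    exact hne_pair x hx y hy k hk.1 hk.2 (sub_eq_zero.mp h0)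
  obtain ⟨ε, hε, hlb⟩ := pos_lb_of_finite W hWfin hWpos
  refine ⟨ε, hε, fun x hx y hy k hk1 hk2 => hlb _ ?_⟩
  exact ⟨⟨⟨x, y⟩, k⟩, ⟨⟨hx, hy⟩, by simp [Set.mem_Ico]; omega⟩, rfl⟩

end main

lemma dichotomy (d N : ℕ) (T : Set S1) (hd : 2 ≤ d) (hN : 3 ≤ N)
    (hcard : ∀ i : ℕ, ((fd d)^[i] '' T).ncard = N) :
    (∃ ε : ℝ, 0 < ε ∧ ∀ i : ℕ, ∀ x ∈ (fd d)^[i] '' T, ∀ y ∈ (fd d)^[i] '' T, ∀ k : ℕ,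
        1 ≤ k → k < d → ε ≤ ‖(y - x) - (((k:ℝ)/(d:ℝ) : ℝ) : S1)‖)
    ∨ (∃ k : ℕ, 1 ≤ k ∧ k < d ∧ ∀ n : ℕ, ∃ i, n ≤ i ∧ ∃ x ∈ (fd d)^[i] '' T,
        ∃ y ∈ (fd d)^[i] '' T, ‖(y - x) - (((k:ℝ)/(d:ℝ) : ℝ) : S1)‖ < 1/(n+1)) := by
  classical
  by_cases hQ : ∃ k : ℕ, 1 ≤ k ∧ k < d ∧ ∀ n : ℕ, ∃ i, n ≤ i ∧ ∃ x ∈ (fd d)^[i] '' T,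
      ∃ y ∈ (fd d)^[i] '' T, ‖(y - x) - (((k:ℝ)/(d:ℝ) : ℝ) : S1)‖ < 1/(n+1)
  · exact Or.inr hQ
  · left
    push_neg at hQ
    -- for each k, get a threshold
    have hQ' : ∀ k : ℕ, 1 ≤ k → k < d → ∃ n : ℕ, ∀ i, n ≤ i → ∀ x ∈ (fd d)^[i] '' T,
        ∀ y ∈ (fd d)^[i] '' T, 1/(n+1) ≤ ‖(y - x) - (((k:ℝ)/(d:ℝ) : ℝ) : S1)‖ := by
      exact hQ
    choose! nk hnk using hQ'
    set Kset : Finset ℕ := Finset.Ico 1 d with hKset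
    have hKne : Kset.Nonempty := ⟨1, by simp [hKset]; omega⟩
    set M : ℕ := Kset.sup nk with hM
    set εs : ℝ := (Kset.image (fun k => 1/((nk k : ℝ)+1))).min' (hKne.image _) with hεs
    have hεs_pos : 0 < εs := by
      have hmem := (Kset.image (fun k => 1/((nk k : ℝ)+1))).min'_mem (hKne.image _)
      rw [Finset.mem_image] at hmem
      obtain ⟨k, -, hk⟩ := hmem
      rw [hεs, ← hk]
      positivity
    -- early times
    have hearly : ∀ i : ℕ, ∃ ε : ℝ, 0 < ε ∧ ∀ x ∈ (fd d)^[i] '' T, ∀ y ∈ (fd d)^[i] '' T,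
        ∀ k : ℕ, 1 ≤ k → k < d → ε ≤ ‖(y - x) - (((k:ℝ)/(d:ℝ) : ℝ) : S1)‖ :=
      fun i => single_time_lb d N T hd hN hcard i
    choose εf hεf_pos hεf using hearly
    by_cases hM0 : M = 0
    · -- all times are ≥ M = 0
      refine ⟨εs, hεs_pos, fun i x hx y hy k hk1 hk2 => ?_⟩
      have hkK : k ∈ Kset := by simp [hKset]; omega
      have hiM : nk k ≤ i := le_trans (le_trans (Finset.le_sup hkK) (le_of_eq hM.symm.symm)) (by omega)
      calc εs ≤ 1/((nk k : ℝ)+1) := Finset.min'_le _ _ (Finset.mem_image_of_mem _ hkK)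
        _ ≤ ‖(y - x) - (((k:ℝ)/(d:ℝ) : ℝ) : S1)‖ := hnk k hk1 hk2 i hiM x hx y hy
    · set ε0 : ℝ := ((Finset.range M).image εf).min' (by
        refine Finset.Nonempty.image ?_ _
        exact Finset.nonempty_range_iff.mpr hM0) with hε0
      have hε0_pos : 0 < ε0 := by
        have hmem := ((Finset.range M).image εf).min'_mem (by
          refine Finset.Nonempty.image ?_ _
          exact Finset.nonempty_range_iff.mpr hM0)
        rw [Finset.mem_image] at hmem
        obtain ⟨i, -, hi⟩ := hmem
        rw [hε0, ← hi]
        exact hεf_pos i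
      refine ⟨min εs ε0, lt_min hεs_pos hε0_pos, fun i x hx y hy k hk1 hk2 => ?_⟩
      rcases lt_or_ge i M with hiM | hiM
      · calc min εs ε0 ≤ ε0 := min_le_right _ _
          _ ≤ εf i := Finset.min'_le _ _ (Finset.mem_image_of_mem _ (Finset.mem_range.mpr hiM))
          _ ≤ _ := hεf i x hx y hy k hk1 hk2
      · have hkK : k ∈ Kset := by simp [hKset]; omega
        have hnki : nk k ≤ i := le_trans (Finset.le_sup hkK) hiM
        calc min εs ε0 ≤ εs := min_le_left _ _
          _ ≤ 1/((nk k : ℝ)+1) := Finset.min'_le _ _ (Finset.mem_image_of_mem _ hkK)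
          _ ≤ _ := hnk k hk1 hk2 i hnki x hx y hy


lemma vol_triangle_ge (A B C : ℂ) (hA : ‖A‖ = 1) (hB : ‖B‖ = 1)
    (hC : ‖C‖ = 1) (c1 : ℝ) (hc1 : 0 ≤ c1) (hAB : c1 ≤ dist A B)
    (hAC : c1 ≤ dist A C) (hBC : c1 ≤ dist B C) :
    ENNReal.ofReal (c1^3/8) ≤ volume (convexHull ℝ ({A, B, C} : Set ℂ)) := by
  rw [vol_triangle_eq A B C]
  have hdet := det_identity A B C hA hB hC
  have hABd : c1 ≤ ‖B - A‖ := by rwa [← Complex.dist_eq, dist_comm]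
  have hACd : c1 ≤ ‖C - A‖ := by rwa [← Complex.dist_eq, dist_comm]
  have hBCd : c1 ≤ ‖B - C‖ := by rwa [← Complex.dist_eq]
  have h1 : c1^3/2 ≤ |(B-A).re*(C-A).im - (B-A).im*(C-A).re| := by
    rw [hdet]
    have : c1^3 ≤ ‖B-A‖ * ‖C-A‖ * ‖B-C‖ := by
      calc c1^3 = c1 * c1 * c1 := by ring
        _ ≤ _ := by
            apply mul_le_mul (mul_le_mul hABd hACd hc1 (norm_nonneg _)) hBCd hc1
            positivity
    linarith
  calc ENNReal.ofReal (c1^3/8) = ENNReal.ofReal (c1^3/2) * ENNReal.ofReal (1/4) := by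
        rw [← ENNReal.ofReal_mul (by positivity)]
        congr 1
        ring
    _ ≤ ENNReal.ofReal (|(B-A).re*(C-A).im - (B-A).im*(C-A).re|)
        * volume (convexHull ℝ ({0, 1, Complex.I} : Set ℂ)) := by
        exact mul_le_mul' (ENNReal.ofReal_le_ofReal h1) unit_triangle_vol_ge

lemma exists_three {α : Type*} (s : Set α) (hs : s.Finite) (h3 : 3 ≤ s.ncard) :
    ∃ a ∈ s, ∃ b ∈ s, ∃ c ∈ s, a ≠ b ∧ a ≠ c ∧ b ≠ c := by
  classical
  have hcard : 3 ≤ hs.toFinset.card := by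
    rw [Set.ncard_eq_toFinset_card s hs] at h3
    exact h3
  obtain ⟨a, ha⟩ := Finset.card_pos.mp (show 0 < hs.toFinset.card by omega)
  have h2 : 0 < (hs.toFinset.erase a).card := by
    rw [Finset.card_erase_of_mem ha]; omega
  obtain ⟨b, hb⟩ := Finset.card_pos.mp h2
  have h3' : 0 < ((hs.toFinset.erase a).erase b).card := by
    rw [Finset.card_erase_of_mem hb, Finset.card_erase_of_mem ha]; omega
  obtain ⟨c, hc⟩ := Finset.card_pos.mp h3'
  have hba : b ≠ a := Finset.ne_of_mem_erase hb
  have hcb : c ≠ b := Finset.ne_of_mem_erase hc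
  have hca : c ≠ a := Finset.ne_of_mem_erase (Finset.mem_of_mem_erase hc)
  refine ⟨a, ?_, b, ?_, c, ?_, fun h => hba h.symm, fun h => hca h.symm, fun h => hcb h.symm⟩
  · rwa [← Set.Finite.mem_toFinset hs]
  · rw [← Set.Finite.mem_toFinset hs]; exact Finset.mem_of_mem_erase hb
  · rw [← Set.Finite.mem_toFinset hs]; exact Finset.mem_of_mem_erase (Finset.mem_of_mem_erase hc)

lemma packing (d N : ℕ) (T : Set S1) (hd : 2 ≤ d) (hN : 3 ≤ N)
    (hcard : ∀ i : ℕ, ((fd d)^[i] '' T).ncard = N)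
    (hdisj : ∀ i j : ℕ, i ≠ j → Disjoint (CH ((fd d)^[i] '' T)) (CH ((fd d)^[j] '' T)))
    (ε : ℝ) (hε : 0 < ε) (hε2 : ε ≤ 1/2)
    (hUA : ∀ i : ℕ, ∀ x ∈ (fd d)^[i] '' T, ∀ y ∈ (fd d)^[i] '' T, ∀ k : ℕ,
      1 ≤ k → k < d → ε ≤ ‖(y - x) - (((k:ℝ)/(d:ℝ) : ℝ) : S1)‖) : False := by
  classical
  have hfin : ∀ j : ℕ, ((fd d)^[j] '' T).Finite := by
    intro j
    by_contra h
    have h2 : ((fd d)^[j] '' T).Infinite := h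
    have := h2.ncard
    rw [hcard j] at this
    omega
  have hTfin : T.Finite := by
    have := hfin 0
    simpa using this
  -- per-pair thresholds
  have hpair : ∀ p : S1 × S1, ∃ I : ℕ, (p.1 ∈ T → p.2 ∈ T → p.1 ≠ p.2 →
      ∀ i, I ≤ i → ε ≤ ‖(fd d)^[i] p.2 - (fd d)^[i] p.1‖) := by
    intro p
    by_cases hp : p.1 ∈ T ∧ p.2 ∈ T ∧ p.1 ≠ p.2
    · obtain ⟨h1, h2, h3⟩ := hp
      have hg := growth d hd ε hε (fun i => (fd d)^[i] p.2 - (fd d)^[i] p.1)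
        (by
          intro i
          simp only [Function.iterate_succ_apply']
          show fd d ((fd d)^[i] p.2) - fd d ((fd d)^[i] p.1) = _
          unfold fd
          rw [smul_sub])
        (by
          simp only [Function.iterate_zero_apply]
          exact sub_ne_zero_of_ne (Ne.symm h3))
        (by
          intro i k hk1 hk2
          exact hUA i _ (Set.mem_image_of_mem _ h1) _ (Set.mem_image_of_mem _ h2) k hk1 hk2)
      obtain ⟨I, hI⟩ := hg
      exact ⟨I, fun _ _ _ i hi => hI i hi⟩
    · exact ⟨0, fun h1 h2 h3 => absurd ⟨h1, h2, h3⟩ hp⟩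
  choose J hJ using hpair
  set Istar : ℕ := (hTfin.toFinset ×ˢ hTfin.toFinset).sup J with hIstar
  have hsep : ∀ i, Istar ≤ i → ∀ x' ∈ (fd d)^[i] '' T, ∀ y' ∈ (fd d)^[i] '' T,
      x' ≠ y' → ε ≤ ‖y' - x'‖ := by
    intro i hi x' hx' y' hy' hne
    obtain ⟨x, hx, rfl⟩ := hx'
    obtain ⟨y, hy, rfl⟩ := hy'
    have hxy : x ≠ y := fun h => hne (by rw [h])
    have hmem : (x, y) ∈ hTfin.toFinset ×ˢ hTfin.toFinset := by
      rw [Finset.mem_product]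
      constructor <;> rwa [Set.Finite.mem_toFinset]
    exact hJ (x, y) hx hy hxy i (le_trans (Finset.le_sup hmem) hi)
  -- lower bound on volumes
  set c1 : ℝ := 2 * Real.sin (Real.pi * ε) with hc1
  have hc1pos : 0 < c1 := by
    rw [hc1]
    have : 0 < Real.sin (Real.pi * ε) := by
      apply Real.sin_pos_of_pos_of_lt_pi
      · positivity
      · nlinarith [Real.pi_pos]
    linarith
  set cV : ENNReal := ENNReal.ofReal (c1^3/8) with hcV
  have hcV0 : cV ≠ 0 := by
    rw [hcV]
    simp only [ne_eq, ENNReal.ofReal_eq_zero, not_le]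
    positivity
  have hvol : ∀ i, Istar ≤ i → cV ≤ volume (CH ((fd d)^[i] '' T)) := by
    intro i hi
    obtain ⟨a, ha, b, hb, c, hc, hab, hac, hbc⟩ :=
      exists_three _ (hfin i) (by rw [hcard i]; exact hN)
    have hd1 : c1 ≤ dist (emb a) (emb b) :=
      emb_dist_ge ε hε a b (hsep i hi b hb a ha (Ne.symm hab))
    have hd2 : c1 ≤ dist (emb a) (emb c) :=
      emb_dist_ge ε hε a c (hsep i hi c hc a ha (Ne.symm hac))
    have hd3 : c1 ≤ dist (emb b) (emb c) :=
      emb_dist_ge ε hε b c (hsep i hi c hc b hb (Ne.symm hbc))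
    have htri := vol_triangle_ge (emb a) (emb b) (emb c) (emb_norm_one a) (emb_norm_one b)
      (emb_norm_one c) c1 hc1pos.le hd1 hd2 hd3
    refine le_trans htri (measure_mono ?_)
    apply convexHull_mono
    intro z hz
    simp only [Set.mem_insert_iff, Set.mem_singleton_iff] at hz
    rcases hz with rfl | rfl | rfl
    · exact Set.mem_image_of_mem _ ha
    · exact Set.mem_image_of_mem _ hb
    · exact Set.mem_image_of_mem _ hc
  -- packing contradiction
  set S : ℕ → Set ℂ := fun n => CH ((fd d)^[Istar + n] '' T) with hS
  have hSdisj : Pairwise (Function.onFun Disjoint S) := by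
    intro m n hmn
    exact hdisj (Istar + m) (Istar + n) (by omega)
  have hSmeas : ∀ n, MeasurableSet (S n) := by
    intro n
    have : IsCompact (S n) := Set.Finite.isCompact_convexHull ℝ ((hfin _).image emb)
    exact this.isClosed.measurableSet
  have hSsub : ∀ n, S n ⊆ Metric.closedBall (0:ℂ) 1 := by
    intro n
    apply convexHull_min
    · rintro z ⟨w, -, rfl⟩
      rw [Metric.mem_closedBall, dist_zero_right, emb_norm_one]
    · exact convex_closedBall 0 1
  have hunion : volume (⋃ n, S n) = ∑' n, volume (S n) := measure_iUnion hSdisj hSmeas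
  have htop : (⊤ : ENNReal) ≤ volume (⋃ n, S n) := by
    rw [hunion]
    calc (⊤ : ENNReal) = ∑' _ : ℕ, cV := (ENNReal.tsum_const_eq_top_of_ne_zero hcV0).symm
      _ ≤ ∑' n, volume (S n) := ENNReal.tsum_le_tsum (fun n => hvol _ (Nat.le_add_right _ _))
  have hlt : volume (⋃ n, S n) < ⊤ := by
    apply lt_of_le_of_lt (measure_mono (Set.iUnion_subset hSsub))
    exact measure_closedBall_lt_top
  exact absurd (lt_of_le_of_lt htop hlt) (lt_irrefl _)


/-- a wandering N-gon has a critical leaf: a critical chord which is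
a Hausdorff limit of chords from a subsequence of the polygons CH(T_i). -/
theorem stmt11 (d N : ℕ) (hd : 2 ≤ d) (hN : 3 ≤ N) (T : Set S1)
    (hw : Wandering d N T) :
    ∃ a b : S1, a ≠ b ∧ fd d a = fd d b ∧ InLimitSet d T a b := by
  by_contra hcon
  have hcard : ∀ i : ℕ, ((fd d)^[i] '' T).ncard = N := fun i => (hw i 0).1
  have hdisj : ∀ i j : ℕ, i ≠ j → Disjoint (CH ((fd d)^[i] '' T)) (CH ((fd d)^[j] '' T)) :=
    fun i j hij => (hw i j).2 hij
  rcases dichotomy d N T hd hN hcard with ⟨ε, hε, hUA⟩ | ⟨k, hk1, hk2, hQ⟩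
  · exact packing d N T hd hN hcard hdisj (min ε (1/2)) (lt_min hε (by norm_num))
      (min_le_right _ _)
      (fun i x hx y hy k hk1 hk2 => le_trans (min_le_left _ _) (hUA i x hx y hy k hk1 hk2))
  · exact hcon (build_limit d hd T k hk1 hk2 hQ)
end
end

section
/- Let T form a wandering N-gon under f(z) = z^d satisfying the standing assumption (f|_{T_i} orientation preserving, s_{N−2}(T_i) < ε_T < 1/(3dN) for all i). For any i ≥ 0 and any k ∈ {1, …, N−2}, exactly one of the following holds: (1) s_k(T_i) > s̃_cr(T_i) and the image-hole of H_k(T_i) is H_{k+1}(T_{i+1}); or (2) s̃_cr(T_i) > s_k(T_i) and the image-hole of H_k(T_i) is H_k(T_{i+1}). Moreover, if (1) holds for some k, then the image-hole of the critical hole is one of the k smallest holes of T_{i+1} and s̃_cr(T_i) < ε_T. -/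
open MeasureTheory Set Metric Filter Topology

noncomputable section

set_option maxRecDepth 8000
set_option maxHeartbeats 2000000
set_option linter.unusedSectionVars false

namespace Wk

lemma toIcoMod_eq_fract (z : ℝ) : toIcoMod (one_pos) 0 z = Int.fract z := by
  refine (toIcoMod_eq_iff one_pos).2 ⟨⟨Int.fract_nonneg z, by
    rw [zero_add]; exact Int.fract_lt_one z⟩, ⌊z⌋, ?_⟩
  rw [zsmul_eq_mul, mul_one, Int.fract]; ring

lemma toIocMod_eq (z : ℝ) : toIocMod (one_pos) 0 z = 1 - Int.fract (-z) := by
  refine (toIocMod_eq_iff one_pos).2 ⟨⟨by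
      have := Int.fract_lt_one (-z); linarith, by
      have := Int.fract_nonneg (-z); rw [zero_add]; linarith⟩,
    -⌊-z⌋ - 1, ?_⟩
  rw [zsmul_eq_mul, mul_one, Int.fract]
  push_cast
  ring

noncomputable def gap (a b : S1) : ℝ :=
  (QuotientAddGroup.equivIcoMod (p := (1:ℝ)) one_pos 0 (b - a) : ℝ)

lemma coe_sub_coe (a b : ℝ) : (b : S1) - (a : S1) = ((b - a : ℝ) : S1) := rfl

lemma gap_coe (a b : ℝ) : gap (a : S1) (b : S1) = Int.fract (b - a) := by
  rw [gap, coe_sub_coe, QuotientAddGroup.equivIcoMod_coe]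
  exact toIcoMod_eq_fract _

lemma gap_nonneg (a b : S1) : 0 ≤ gap a b :=
  (QuotientAddGroup.equivIcoMod (p := (1:ℝ)) one_pos 0 (b - a)).2.1

lemma gap_lt_one (a b : S1) : gap a b < 1 := by
  have := (QuotientAddGroup.equivIcoMod (p := (1:ℝ)) one_pos 0 (b - a)).2.2
  unfold gap
  linarith [this]

lemma coe_fract (z : ℝ) : ((Int.fract z : ℝ) : S1) = (z : S1) := by
  refine (QuotientAddGroup.eq).2 ?_
  refine AddSubgroup.mem_zmultiples_iff.2 ⟨⌊z⌋, ?_⟩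
  rw [zsmul_eq_mul, mul_one, Int.fract]
  ring

lemma coe_eq_zero_iff_fract {z : ℝ} : ((z : ℝ) : S1) = 0 ↔ Int.fract z = 0 := by
  constructor
  · intro h
    rcases AddCircle.coe_eq_zero_iff _ |>.1 h with ⟨n, hn⟩
    rw [zsmul_eq_mul, mul_one] at hn
    rw [← hn, Int.fract_intCast]
  · intro h
    have := coe_fract z
    rw [h] at this
    simpa using this.symm

lemma gap_eq_zero_iff {a b : S1} : gap a b = 0 ↔ b = a := by
  induction a using QuotientAddGroup.induction_on with | H a =>
  induction b using QuotientAddGroup.induction_on with | H b =>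
  rw [gap_coe]
  constructor
  · intro h
    have : ((b - a : ℝ) : S1) = 0 := coe_eq_zero_iff_fract.2 h
    rw [← coe_sub_coe] at this
    exact sub_eq_zero.1 this
  · intro h
    have : ((b - a : ℝ) : S1) = 0 := by rw [← coe_sub_coe, h, sub_self]
    exact coe_eq_zero_iff_fract.1 this

lemma gap_pos {a b : S1} (h : b ≠ a) : 0 < gap a b :=
  lt_of_le_of_ne (gap_nonneg a b) (fun e => h (gap_eq_zero_iff.1 e.symm))

lemma add_gap (a b : S1) : a + ((gap a b : ℝ) : S1) = b := by
  induction a using QuotientAddGroup.induction_on with | H a =>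
  induction b using QuotientAddGroup.induction_on with | H b =>
  rw [gap_coe, coe_fract, ← coe_sub_coe]
  abel

/-- key characterization of strict betweenness -/
lemma sbtw_iff_gap {a c : S1} (hac : a ≠ c) (y : S1) :
    SBtw.sbtw a y c ↔ 0 < gap a y ∧ gap a y < gap a c := by
  induction a using QuotientAddGroup.induction_on with | H a =>
  induction y using QuotientAddGroup.induction_on with | H y =>
  induction c using QuotientAddGroup.induction_on with | H c =>
  rw [gap_coe a y, gap_coe a c]
  have hG : Int.fract (c - a) ≠ 0 := by
    intro h
    exact hac (sub_eq_zero.1 ((coe_sub_coe a c) ▸ coe_eq_zero_iff_fract.2 h)).symm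
  set F := Int.fract (y - a) with hF
  set G := Int.fract (c - a) with hGdef
  have hF0 : 0 ≤ F := Int.fract_nonneg _
  have hF1 : F < 1 := Int.fract_lt_one _
  have hG0 : 0 < G := lt_of_le_of_ne (Int.fract_nonneg _) (Ne.symm hG)
  have hG1 : G < 1 := Int.fract_lt_one _
  have hbtw1 : Btw.btw (a : S1) (y : S1) (c : S1) ↔ F ≤ G := by
    rw [QuotientAddGroup.btw_coe_iff', toIcoMod_eq_fract, toIocMod_eq]
    rw [show -(c - a) = (a - c) by ring]
    have : Int.fract (a - c) = 1 - G := by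
      rw [show a - c = -(c - a) by ring, Int.fract_neg hG]
    rw [this]
    constructor <;> intro h <;> linarith
  have hfycF : Int.fract (y - c) = Int.fract (F - G) := by
    have e1 : y - c = (F - G) + ((⌊y-a⌋ - ⌊c-a⌋ : ℤ) : ℝ) := by
      rw [hF, hGdef, Int.fract, Int.fract]; push_cast; ring
    rw [e1, Int.fract_add_intCast]
  have hbtw2 : Btw.btw (c : S1) (y : S1) (a : S1) ↔ Int.fract (F - G) ≤ 1 - G := by
    rw [QuotientAddGroup.btw_coe_iff', toIcoMod_eq_fract, toIocMod_eq]
    rw [show -(a - c) = (c - a) by ring, ← hGdef, hfycF]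
  show (Btw.btw (a:S1) (y:S1) (c:S1) ∧ ¬ Btw.btw (c:S1) (y:S1) (a:S1)) ↔ _
  rw [hbtw1, hbtw2]
  rcases lt_trichotomy F G with h | h | h
  · have : Int.fract (F - G) = F - G + 1 := by
      have h1 : F - G + 1 ∈ Set.Ico (0:ℝ) 1 := ⟨by linarith, by linarith⟩
      have : Int.fract (F - G + 1) = F - G + 1 := Int.fract_eq_self.2 ⟨h1.1, h1.2⟩
      calc Int.fract (F - G) = Int.fract (F - G + (1:ℤ)) := by rw [Int.fract_add_intCast]
        _ = F - G + 1 := by push_cast at this ⊢; exact this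
    rw [this]
    constructor
    · rintro ⟨-, h2⟩
      refine ⟨?_, h⟩
      by_contra h3
      push_neg at h3
      have hF00 : F = 0 := le_antisymm h3 hF0
      exact h2 (by rw [hF00]; linarith)
    · rintro ⟨h1, -⟩
      exact ⟨le_of_lt h, fun h2 => by linarith⟩
  · -- F = G : y = c
    rw [h]
    have : Int.fract (G - G) = 0 := by simp
    rw [this]
    constructor
    · rintro ⟨-, h2⟩; exact absurd (by linarith) h2
    · rintro ⟨-, h2⟩; exact absurd h2 (lt_irrefl G)
  · constructor
    · rintro ⟨h1, -⟩; exact absurd h1 (not_le.2 h)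
    · rintro ⟨-, h2⟩; exact absurd h2 (not_lt.2 (le_of_lt h))


lemma gap_rev {a b : S1} (h : a ≠ b) : gap b a = 1 - gap a b := by
  induction a using QuotientAddGroup.induction_on with | H a =>
  induction b using QuotientAddGroup.induction_on with | H b =>
  rw [gap_coe, gap_coe]
  have hne : Int.fract (b - a) ≠ 0 := by
    intro hz
    have : ((b - a : ℝ) : S1) = 0 := coe_eq_zero_iff_fract.2 hz
    rw [← coe_sub_coe] at this
    exact h (sub_eq_zero.1 this).symm
  rw [show a - b = -(b - a) by ring, Int.fract_neg hne]

-- placeholders for sec1 results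

lemma gap_add_coe (a : S1) (s : ℝ) : gap a (a + (s : S1)) = Int.fract s := by
  induction a using QuotientAddGroup.induction_on with | H a =>
  have : (a : S1) + (s : S1) = ((a + s : ℝ) : S1) := rfl
  rw [this, gap_coe]
  norm_num

lemma openArc_eq_image {a c : S1} (hac : a ≠ c) :
    ∀ a₀ : ℝ, (a₀ : S1) = a →
    openArc a c = (QuotientAddGroup.mk : ℝ → S1) '' Ioo a₀ (a₀ + gap a c) := by
  intro a₀ ha₀
  ext y
  simp only [openArc, Set.mem_setOf_eq, Set.mem_image]
  rw [sbtw_iff_gap hac]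
  constructor
  · rintro ⟨h1, h2⟩
    refine ⟨a₀ + gap a y, ⟨by linarith, by linarith⟩, ?_⟩
    have : ((a₀ + gap a y : ℝ) : S1) = a + ((gap a y : ℝ) : S1) := by
      rw [← ha₀]; rfl
    rw [this, add_gap]
  · rintro ⟨t, ⟨ht1, ht2⟩, rfl⟩
    have h1 : ((t : ℝ) : S1) = a + ((t - a₀ : ℝ) : S1) := by
      rw [← ha₀]; show _ = ((a₀ + (t - a₀) : ℝ) : S1); norm_num
    have h2 : gap a ↑t = t - a₀ := by
      rw [h1, gap_add_coe, Int.fract_eq_self.2 ⟨by linarith, by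
        have := gap_lt_one a c; linarith⟩]
    rw [h2]
    exact ⟨by linarith, by linarith⟩

lemma openArc_isOpen {a c : S1} : IsOpen (openArc a c) := by
  rcases eq_or_ne a c with rfl | hac
  · have h : openArc a a = ∅ := by
      ext y; simp only [openArc, Set.mem_setOf_eq, Set.mem_empty_iff_false, iff_false]
      intro h; exact h.2 h.1
    rw [h]; exact isOpen_empty
  · induction a using QuotientAddGroup.induction_on with | H a₀ =>
    rw [openArc_eq_image hac a₀ rfl]
    exact QuotientAddGroup.isOpenMap_coe _ isOpen_Ioo

lemma openArc_nonempty {a c : S1} (hac : a ≠ c) : (openArc a c).Nonempty := by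
  refine ⟨a + ((gap a c / 2 : ℝ) : S1), ?_⟩
  have hg : 0 < gap a c := gap_pos (Ne.symm hac)
  have h1 : gap a (a + ((gap a c / 2 : ℝ) : S1)) = gap a c / 2 := by
    rw [gap_add_coe, Int.fract_eq_self.2 ⟨by linarith, by have := gap_lt_one a c; linarith⟩]
  show SBtw.sbtw a _ c
  rw [sbtw_iff_gap hac, h1]
  constructor <;> linarith

lemma left_not_mem_openArc {a c : S1} : a ∉ openArc a c := by
  intro h
  rcases eq_or_ne a c with rfl | hac
  · exact h.2 h.1
  · rw [show (a ∈ openArc a c) = SBtw.sbtw a a c from rfl, sbtw_iff_gap hac] at h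
    rw [show gap a a = 0 from gap_eq_zero_iff.2 rfl] at h
    exact lt_irrefl 0 h.1

lemma right_not_mem_openArc {a c : S1} : c ∉ openArc a c := by
  intro h
  rcases eq_or_ne a c with rfl | hac
  · exact h.2 h.1
  · rw [show (c ∈ openArc a c) = SBtw.sbtw a c c from rfl, sbtw_iff_gap hac] at h
    exact lt_irrefl _ h.2

lemma openArc_disjoint_rev {a c : S1} : openArc a c ∩ openArc c a = ∅ := by
  ext y
  simp only [Set.mem_inter_iff, Set.mem_empty_iff_false, iff_false, not_and]
  intro h1 h2
  exact h1.2 h2.1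

lemma closure_openArc {a c : S1} (hac : a ≠ c) (a₀ : ℝ) (ha₀ : (a₀ : S1) = a) :
    closure (openArc a c) = (QuotientAddGroup.mk : ℝ → S1) '' Icc a₀ (a₀ + gap a c) := by
  have hg : 0 < gap a c := gap_pos (Ne.symm hac)
  rw [openArc_eq_image hac a₀ ha₀]
  apply Subset.antisymm
  · apply closure_minimal
    · exact Set.image_mono Ioo_subset_Icc_self
    · exact (isCompact_Icc.image (AddCircle.continuous_mk' 1)).isClosed
  · rw [show Icc a₀ (a₀ + gap a c) = closure (Ioo a₀ (a₀ + gap a c)) by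
      rw [closure_Ioo (by linarith : a₀ ≠ a₀ + gap a c)]]
    exact image_closure_subset_closure_image (AddCircle.continuous_mk' 1)

lemma mem_closure_left {a c : S1} (hac : a ≠ c) : a ∈ closure (openArc a c) ∧
    c ∈ closure (openArc a c) := by
  induction a using QuotientAddGroup.induction_on with | H a₀ =>
  rw [closure_openArc hac a₀ rfl]
  constructor
  · exact ⟨a₀, ⟨le_refl _, by have := gap_pos (Ne.symm hac); linarith⟩, rfl⟩
  · refine ⟨a₀ + gap (a₀ : S1) c, ⟨by have := gap_pos (Ne.symm hac); linarith, le_refl _⟩, ?_⟩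
    have : ((a₀ + gap ((a₀:ℝ):S1) c : ℝ) : S1) = ((a₀:ℝ) : S1) + ((gap ((a₀:ℝ):S1) c : ℝ) : S1) := rfl
    rw [this]
    exact add_gap _ c

lemma closure_openArc_subset {a c : S1} (hac : a ≠ c) :
    closure (openArc a c) ⊆ openArc a c ∪ {a, c} := by
  induction a using QuotientAddGroup.induction_on with | H a₀ =>
  rw [closure_openArc hac a₀ rfl, openArc_eq_image hac a₀ rfl]
  rintro y ⟨t, ht, rfl⟩
  rcases eq_or_lt_of_le ht.1 with rfl | h1
  · exact Or.inr (Or.inl rfl)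
  rcases eq_or_lt_of_le ht.2 with h2 | h2
  · right; right
    rw [h2]
    show ((a₀ + gap _ c : ℝ) : S1) = c
    show ((a₀ : ℝ) : S1) + ((gap _ c : ℝ) : S1) = c
    exact add_gap _ c
  · exact Or.inl ⟨t, ⟨h1, h2⟩, rfl⟩

lemma closure_diff_eq {a c : S1} (hac : a ≠ c) :
    closure (openArc a c) \ openArc a c = {a, c} := by
  apply Subset.antisymm
  · rintro y ⟨hy1, hy2⟩
    rcases closure_openArc_subset hac hy1 with h | h
    · exact absurd h hy2
    · exact h
  · rintro y (rfl | rfl)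
    · exact ⟨(mem_closure_left hac).1, left_not_mem_openArc⟩
    · exact ⟨(mem_closure_left hac).2, right_not_mem_openArc⟩

/-- arcs determine their endpoints -/
lemma openArc_inj {a c a' c' : S1} (hac : a ≠ c) (hac' : a' ≠ c')
    (h : openArc a c = openArc a' c') : a = a' ∧ c = c' := by
  have hpair : ({a, c} : Set S1) = {a', c'} := by
    rw [← closure_diff_eq hac, ← closure_diff_eq hac', h]
  have ha : a = a' ∨ a = c' := by
    have : a ∈ ({a', c'} : Set S1) := hpair ▸ (by exact Or.inl rfl)
    simpa using this
  have hc : c = a' ∨ c = c' := by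
    have : c ∈ ({a', c'} : Set S1) := hpair ▸ (by exact Or.inr rfl)
    simpa using this
  have ha' : a' = a ∨ a' = c := by
    have : a' ∈ ({a, c} : Set S1) := hpair ▸ (by exact Or.inl rfl)
    simpa using this
  have hswap : ¬ (a = c' ∧ c = a') := by
    rintro ⟨rfl, rfl⟩
    have h0 : openArc a c ∩ openArc c a = ∅ := openArc_disjoint_rev
    rw [← h, Set.inter_self] at h0
    exact absurd h0 (Set.nonempty_iff_ne_empty.1 (openArc_nonempty hac))
  rcases ha with h1 | h1
  · rcases hc with h2 | h2
    · exact absurd (h1.trans h2.symm) hac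
    · exact ⟨h1, h2⟩
  · rcases hc with h2 | h2
    · exact absurd ⟨h1, h2⟩ hswap
    · exact absurd (h1.trans h2.symm) hac

lemma openArc_preconnected {a c : S1} : IsPreconnected (openArc a c) := by
  rcases eq_or_ne a c with rfl | hac
  · have h : openArc a a = ∅ := by
      ext y; simp only [openArc, Set.mem_setOf_eq, Set.mem_empty_iff_false, iff_false]
      intro h; exact h.2 h.1
    rw [h]; exact isPreconnected_empty
  · induction a using QuotientAddGroup.induction_on with | H a₀ =>
    rw [openArc_eq_image hac a₀ rfl]
    exact (isPreconnected_Ioo).image _ (AddCircle.continuous_mk' 1).continuousOn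

lemma volume_openArc {a c : S1} (hac : a ≠ c) :
    volume (openArc a c) = ENNReal.ofReal (gap a c) := by
  induction a using QuotientAddGroup.induction_on with | H a₀ =>
  have hg0 : 0 < gap ((a₀:ℝ):S1) c := gap_pos (Ne.symm hac)
  have hg1 : gap ((a₀:ℝ):S1) c < 1 := gap_lt_one _ _
  set g := gap ((a₀:ℝ):S1) c with hg
  have himg := openArc_eq_image hac a₀ rfl
  have hmeas : MeasurableSet (openArc ((a₀:ℝ):S1) c) := openArc_isOpen.measurableSet
  rw [AddCircle.add_projection_respects_measure 1 a₀ hmeas, himg]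
  have hset : (QuotientAddGroup.mk : ℝ → S1) ⁻¹' ((QuotientAddGroup.mk : ℝ → S1) '' Ioo a₀ (a₀ + g))
      ∩ Ioc a₀ (a₀ + 1) = Ioo a₀ (a₀ + g) := by
    apply Subset.antisymm
    · rintro x ⟨hx1, hx2⟩
      rcases hx1 with ⟨y, hy, hxy⟩
      have : ∃ n : ℤ, x - y = n := by
        have h0 : ((y:ℝ):S1) = ((x:ℝ):S1) := hxy
        have h1 : (((x - y : ℝ)):S1) = 0 := by
          rw [show ((x - y : ℝ):S1) = ((x:ℝ):S1) - ((y:ℝ):S1) from rfl, ← h0, sub_self]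
        rcases (AddCircle.coe_eq_zero_iff _).1 h1 with ⟨n, hn⟩
        exact ⟨n, by rw [← hn, zsmul_eq_mul, mul_one]⟩
      rcases this with ⟨n, hn⟩
      have hb1 : (n:ℝ) < 1 := by
        rw [← hn]; rcases hx2 with ⟨hx2a, hx2b⟩; rcases hy with ⟨hy1, hy2⟩; linarith
      have hb2 : (-1:ℝ) < n := by
        rw [← hn]; rcases hx2 with ⟨hx2a, hx2b⟩; rcases hy with ⟨hy1, hy2⟩; linarith
      have : n = 0 := by
        have p1 : n < 1 := by exact_mod_cast hb1
        have p2 : -1 < n := by exact_mod_cast hb2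
        omega
      rw [this] at hn
      simp at hn
      rw [sub_eq_zero] at hn
      rwa [hn]
    · intro x hx
      exact ⟨⟨x, hx, rfl⟩, ⟨hx.1, by rcases hx with ⟨h1, h2⟩; linarith⟩⟩
  rw [hset, Real.volume_Ioo]
  congr 1
  ring

lemma len_openArc {a c : S1} (hac : a ≠ c) : len (openArc a c) = gap a c := by
  rw [len, volume_openArc hac, ENNReal.toReal_ofReal (gap_nonneg a c)]

lemma volume_singleton (x : S1) : volume ({x} : Set S1) = 0 := by
  have h := AddCircle.volume_closedBall (T := 1) (x := x) 0
  rw [show Metric.closedBall x 0 = {x} from Metric.closedBall_zero] at h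
  simpa using h



lemma gap_left_inj {x b b' : S1} (h : gap x b = gap x b') : b = b' := by
  have h1 := add_gap x b
  rw [h] at h1
  rw [add_gap x b'] at h1
  exact h1.symm

/-- the component of any point of an "empty" arc with endpoints in B is the arc -/
lemma component_eq_openArc {B : Set S1} {u w x : S1} (hu : u ∈ B) (hw : w ∈ B)
    (huw : u ≠ w) (hdisj : openArc u w ∩ B = ∅) (hx : x ∈ openArc u w) :
    connectedComponentIn Bᶜ x = openArc u w := by
  have harcB : openArc u w ⊆ Bᶜ := by
    intro y hy hyB
    exact absurd (Set.mem_inter hy hyB) (by rw [hdisj]; exact fun h => h)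
  have hxB : x ∈ Bᶜ := harcB hx
  apply Subset.antisymm
  · -- component ⊆ arc via clopen
    rw [connectedComponentIn_eq_image hxB]
    have hclopen : IsClopen ((Subtype.val : ↥(Bᶜ) → S1) ⁻¹' (openArc u w)) := by
      constructor
      · -- closed
        have hkey : (Subtype.val : ↥(Bᶜ) → S1) ⁻¹' (openArc u w)
            = (Subtype.val : ↥(Bᶜ) → S1) ⁻¹' (closure (openArc u w)) := by
          apply Subset.antisymm
          · exact Set.preimage_mono subset_closure
          · rintro ⟨y, hy⟩ hmem
            rcases closure_openArc_subset huw hmem with h | h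
            · exact h
            · exfalso
              rcases h with h | h
              · have h' : y = u := h
                rw [h'] at hy
                exact hy hu
              · have h' : y = w := h
                rw [h'] at hy
                exact hy hw
        rw [hkey]
        exact isClosed_closure.preimage continuous_subtype_val
      · exact openArc_isOpen.preimage continuous_subtype_val
    have hsub := hclopen.connectedComponent_subset (x := ⟨x, hxB⟩) hx
    intro y hy
    rcases hy with ⟨z, hz, rfl⟩
    exact hsub hz
  · exact openArc_preconnected.subset_connectedComponentIn hx harcB

lemma adjacent_isHole {B : Set S1} {u w : S1} (hu : u ∈ B) (hw : w ∈ B)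
    (huw : u ≠ w) (hdisj : openArc u w ∩ B = ∅) : IsHole B (openArc u w) := by
  obtain ⟨x, hx⟩ := openArc_nonempty huw
  have harcB : openArc u w ⊆ Bᶜ := by
    intro y hy hyB
    exact absurd (Set.mem_inter hy hyB) (by rw [hdisj]; exact fun h => h)
  exact ⟨x, harcB hx, (component_eq_openArc hu hw huw hdisj hx).symm⟩

lemma hole_eq_openArc {B : Set S1} (hBfin : B.Finite) (hB2 : 1 < B.ncard) {G : Set S1}
    (hG : IsHole B G) : ∃ u w : S1, u ∈ B ∧ w ∈ B ∧ u ≠ w ∧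
      openArc u w ∩ B = ∅ ∧ G = openArc u w := by
  obtain ⟨x, hxB, hGx⟩ := hG
  obtain ⟨b₁, hb₁, b₂, hb₂, hb12⟩ := (Set.one_lt_ncard hBfin).1 hB2
  have hBne : B.Nonempty := ⟨b₁, hb₁⟩
  obtain ⟨w, hwB, hwmin⟩ := Set.exists_min_image B (fun b => gap x b) hBfin hBne
  obtain ⟨u, huB, humax⟩ := Set.exists_max_image B (fun b => gap x b) hBfin hBne
  set δw := gap x w with hδw
  set δu := gap x u with hδu
  have hne_x : ∀ b ∈ B, b ≠ x := fun b hb he => hxB (he ▸ hb)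
  have hδwpos : 0 < δw := gap_pos (hne_x w hwB)
  have hδupos : 0 < δu := gap_pos (hne_x u huB)
  have hδu1 : δu < 1 := gap_lt_one x u
  have hδw1 : δw < 1 := gap_lt_one x w
  have hwu : δw < δu := by
    have h1 : δw ≤ gap x b₁ := hwmin b₁ hb₁
    have h2 : δw ≤ gap x b₂ := hwmin b₂ hb₂
    have h3 : gap x b₁ ≤ δu := humax b₁ hb₁
    have h4 : gap x b₂ ≤ δu := humax b₂ hb₂
    have h5 : gap x b₁ ≠ gap x b₂ := fun h => hb12 (gap_left_inj h)
    rcases lt_or_ge δw δu with h | h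
    · exact h
    · exfalso
      have e1 : gap x b₁ = δw := le_antisymm (le_trans h3 h) h1
      have e2 : gap x b₂ = δw := le_antisymm (le_trans h4 h) h2
      exact h5 (e1.trans e2.symm)
  have huw : u ≠ w := fun h => absurd (h ▸ rfl : gap x u = gap x w) (by
    rw [← hδw, ← hδu]; exact ne_of_gt hwu)
  -- gap helpers
  have coe_add : ∀ (a : S1) (s t : ℝ), (a + (s:S1)) + (t:S1) = a + ((s+t : ℝ):S1) := by
    intro a s t
    rw [add_assoc]
    norm_cast
  have gap_of_add : ∀ (a : S1) (s t : ℝ), gap (a + (s:S1)) (a + (t:S1)) = Int.fract (t - s) := by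
    intro a s t
    have h1 : a + (t:S1) = (a + (s:S1)) + ((t - s : ℝ):S1) := by
      rw [coe_add a s (t-s)]
      norm_num
    rw [h1, gap_add_coe]
  have fract_of_neg : ∀ z : ℝ, -1 ≤ z → z < 0 → Int.fract z = z + 1 := by
    intro z h1 h2
    have : Int.fract (z + (1:ℤ)) = Int.fract z := Int.fract_add_intCast z 1
    rw [← this, Int.fract_eq_self.2 ⟨by push_cast; linarith, by push_cast; linarith⟩]
    push_cast
    ring
  have hu_eq : u = x + ((δu : ℝ) : S1) := (add_gap x u).symm
  have hw_eq : w = x + ((δw : ℝ) : S1) := (add_gap x w).symm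
  have hguw : gap u w = δw - δu + 1 := by
    rw [hu_eq, hw_eq, gap_of_add, fract_of_neg _ (by linarith) (by linarith)]
  have hgux : gap u x = 1 - δu := by
    rw [gap_rev (Ne.symm (hne_x u huB))]
  have hxarc : x ∈ openArc u w := by
    show SBtw.sbtw u x w
    rw [sbtw_iff_gap huw, hgux, hguw]
    constructor <;> linarith
  have hdisj : openArc u w ∩ B = ∅ := by
    ext b
    simp only [Set.mem_inter_iff, Set.mem_empty_iff_false, iff_false, not_and]
    intro hbarc hbB
    have hbx : b = x + ((gap x b : ℝ) : S1) := (add_gap x b).symm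
    set γb := gap x b with hγb
    have h1 : 0 < gap u b ∧ gap u b < gap u w := (sbtw_iff_gap huw b).1 hbarc
    have h2 : gap u b = Int.fract (γb - δu) := by
      conv_lhs => rw [hu_eq, hbx]
      rw [gap_of_add]
    have hγw : δw ≤ γb := hwmin b hbB
    have hγu : γb ≤ δu := humax b hbB
    rcases eq_or_lt_of_le hγu with he | hlt
    · rw [he] at h2
      simp at h2
      rw [h2] at h1
      exact lt_irrefl 0 h1.1
    · have : Int.fract (γb - δu) = γb - δu + 1 := fract_of_neg _ (by
        have := gap_lt_one x b; rw [← hγb] at this; linarith) (by linarith)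
      rw [this] at h2
      rw [h2, hguw] at h1
      have := h1.2
      linarith
  exact ⟨u, w, huB, hwB, huw, hdisj, by
    rw [hGx]
    exact component_eq_openArc huB hwB huw hdisj hxarc⟩



-- distinct triple gives sbtw one way or other
lemma sbtw_or_sbtw {a b c : S1} (hab : a ≠ b) (hbc : b ≠ c) (hca : c ≠ a) :
    SBtw.sbtw a b c ∨ SBtw.sbtw c b a := by
  rcases btw_total a b c with h | h
  · by_cases h2 : Btw.btw c b a
    · rcases btw_antisymm h h2 with h3 | h3 | h3
      · exact absurd h3 hab
      · exact absurd h3 hbc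
      · exact absurd h3 hca
    · exact Or.inl ⟨h, h2⟩
  · by_cases h2 : Btw.btw a b c
    · rcases btw_antisymm h2 h with h3 | h3 | h3
      · exact absurd h3 hab
      · exact absurd h3 hbc
      · exact absurd h3 hca
    · exact Or.inr ⟨h, h2⟩

lemma sbtw_not_rev {a b c : S1} (h : SBtw.sbtw a b c) : ¬ SBtw.sbtw c b a :=
  fun h2 => h.2 h2.1

section Machinery
variable {d N : ℕ} {T : Set S1} (hd : 2 ≤ d) (hN : 3 ≤ N)
variable (H : ℕ → Fin N → Set S1)

-- the n-th point set
def Bn (d : ℕ) (T : Set S1) (n : ℕ) : Set S1 := (fd d)^[n] '' T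

lemma Bn_succ (n : ℕ) : Bn d T (n+1) = fd d '' Bn d T n := by
  rw [Bn, Bn, Function.iterate_succ', Set.image_comp]

variable {H} (hw : ∀ i : ℕ, ((fd d)^[i] '' T).ncard = N)
  (hH : ∀ n, IsHoleEnum ((fd d)^[n] '' T) (H n))
  (hor : ∀ n, OrientPresOn (fd d) ((fd d)^[n] '' T))

include hw hN in
lemma Bn_fin (n : ℕ) : (Bn d T n).Finite := by
  have h := hw n
  by_contra hinf
  rw [Set.Infinite.ncard (by exact hinf)] at h
  omega

include hw hN in
lemma Bn_card (n : ℕ) : 1 < (Bn d T n).ncard := by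
  have h := hw n
  rw [Bn, h]
  omega

include hd hw hH hor hN in
/-- main step machinery -/
lemma step (n : ℕ) : ∃ σ : Fin N → Fin N, Function.Bijective σ ∧
    ∀ k : Fin N, len (H (n+1) (σ k)) = (d:ℝ) * rem d (len (H n k)) ∧
      ImageHoleRel (fd d) (H n k) (H (n+1) (σ k)) := by
  have hfin := Bn_fin (d := d) (T := T) hN hw
  have hcard := Bn_card (d := d) (T := T) hN hw
  have hch : ∀ k : Fin N, ∃ u w : S1, u ∈ Bn d T n ∧ w ∈ Bn d T n ∧ u ≠ w ∧
      openArc u w ∩ (Bn d T n) = ∅ ∧ H n k = openArc u w := fun k =>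
    hole_eq_openArc (hfin n) (hcard n) ((hH n).2.1 k)
  choose u w hu hwmem huw hdisj heq using hch
  have hinj : Set.InjOn (fd d) (Bn d T n) := (hor n).1
  have hfu : ∀ k, fd d (u k) ∈ Bn d T (n+1) := fun k => by
    rw [Bn_succ]; exact Set.mem_image_of_mem _ (hu k)
  have hfw : ∀ k, fd d (w k) ∈ Bn d T (n+1) := fun k => by
    rw [Bn_succ]; exact Set.mem_image_of_mem _ (hwmem k)
  have hfuw : ∀ k, fd d (u k) ≠ fd d (w k) := fun k he =>
    (huw k) (hinj (hu k) (hwmem k) he)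
  have hfdisj : ∀ k, openArc (fd d (u k)) (fd d (w k)) ∩ (Bn d T (n+1)) = ∅ := by
    intro k
    ext z
    simp only [Set.mem_inter_iff, Set.mem_empty_iff_false, iff_false, not_and]
    intro hzarc hzB
    rw [Bn_succ] at hzB
    rcases hzB with ⟨b, hb, rfl⟩
    have hbu : b ≠ u k := by
      rintro rfl
      exact left_not_mem_openArc hzarc
    have hbw : b ≠ w k := by
      rintro rfl
      exact right_not_mem_openArc hzarc
    rcases sbtw_or_sbtw (Ne.symm hbu) hbw (huw k).symm with hs | hs
    · have hmem : b ∈ openArc (u k) (w k) ∩ (Bn d T n) := ⟨hs, hb⟩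
      rw [hdisj k] at hmem
      exact hmem
    · have := (hor n).2 (w k) (hwmem k) b hb (u k) (hu k) hs
      exact sbtw_not_rev this hzarc
  have hishole : ∀ k, IsHole ((fd d)^[n+1] '' T) (openArc (fd d (u k)) (fd d (w k))) := by
    intro k
    have := adjacent_isHole (hfu k) (hfw k) (hfuw k) (hfdisj k)
    rwa [Bn] at this
  have hsig : ∀ k : Fin N, ∃ j : Fin N,
      H (n+1) j = openArc (fd d (u k)) (fd d (w k)) := fun k =>
    (hH (n+1)).2.2.1 _ (hishole k)
  choose σ hσ using hsig
  have hσinj : Function.Injective σ := by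
    intro k k' he
    have h1 : openArc (fd d (u k)) (fd d (w k)) = openArc (fd d (u k')) (fd d (w k')) := by
      rw [← hσ k, ← hσ k', he]
    obtain ⟨e1, e2⟩ := openArc_inj (hfuw k) (hfuw k') h1
    have hu' : u k = u k' := hinj (hu k) (hu k') e1
    have hw' : w k = w k' := hinj (hwmem k) (hwmem k') e2
    apply (hH n).1
    rw [heq k, heq k', hu', hw']
  refine ⟨σ, (Finite.injective_iff_bijective).1 hσinj, ?_⟩
  intro k
  have hs : len (H n k) = gap (u k) (w k) := by rw [heq k, len_openArc (huw k)]
  have hwk : w k = u k + ((gap (u k) (w k) : ℝ) : S1) := (add_gap _ _).symm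
  have hfd : fd d (w k) = fd d (u k) + (((d : ℝ) * gap (u k) (w k) : ℝ) : S1) := by
    conv_lhs => rw [hwk]
    show d • _ = _
    rw [smul_add]
    show _ = d • u k + _
    congr 1
    rw [← AddCircle.coe_nsmul]
    congr 1
    simp [nsmul_eq_mul]
  have hlen1 : len (H (n+1) (σ k)) = Int.fract ((d:ℝ) * gap (u k) (w k)) := by
    rw [hσ k, len_openArc (hfuw k), hfd, gap_add_coe]
  have hrem : (d:ℝ) * rem d (len (H n k)) = Int.fract ((d:ℝ) * gap (u k) (w k)) := by
    have hfr : Int.fract ((d:ℝ) * gap (u k) (w k))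
        = (d:ℝ) * gap (u k) (w k) - (⌊(d:ℝ) * gap (u k) (w k)⌋ : ℤ) := rfl
    have hd0 : (d:ℝ) ≠ 0 := by
      have h2 : 0 < d := by omega
      positivity
    rw [hs, rem, hfr]
    field_simp
  refine ⟨by rw [hlen1, hrem], ?_⟩
  exact ⟨u k, w k, huw k, heq k, hσ k⟩

include hw hH hN in
lemma len_pos_lt_one (n : ℕ) (k : Fin N) : 0 < len (H n k) ∧ len (H n k) < 1 := by
  obtain ⟨u, w, hu, hwm, huw, hdisj, heq⟩ :=
    hole_eq_openArc ((Bn_fin (d := d) (T := T) hN hw) n)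
      ((Bn_card (d := d) (T := T) hN hw) n) ((hH n).2.1 k)
  rw [heq, len_openArc huw]
  exact ⟨gap_pos (Ne.symm huw), gap_lt_one u w⟩

include hw hH hN in
lemma sum_len (n : ℕ) : ∑ k : Fin N, len (H n k) = 1 := by
  have hfin : (Bn d T n).Finite := (Bn_fin (d := d) (T := T) hN hw) n
  have hcard := (Bn_card (d := d) (T := T) hN hw) n
  set B := Bn d T n with hB
  have hBeq : (fd d)^[n] '' T = B := rfl
  -- each hole is an open arc
  have harc : ∀ k : Fin N, ∃ u w : S1, u ≠ w ∧ H n k = openArc u w := by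
    intro k
    obtain ⟨u, w, _, _, huw, _, heq⟩ := hole_eq_openArc hfin hcard ((hH n).2.1 k)
    exact ⟨u, w, huw, heq⟩
  have hmeas : ∀ k : Fin N, MeasurableSet (H n k) := by
    intro k
    obtain ⟨u, w, huw, heq⟩ := harc k
    rw [heq]
    exact openArc_isOpen.measurableSet
  have hne_top : ∀ k : Fin N, volume (H n k) ≠ ⊤ := by
    intro k
    obtain ⟨u, w, huw, heq⟩ := harc k
    rw [heq, volume_openArc huw]
    exact ENNReal.ofReal_ne_top
  have hdisj : Pairwise (Function.onFun Disjoint fun k => H n k) := by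
    intro k l hkl
    rw [Function.onFun, Set.disjoint_iff_inter_eq_empty]
    by_contra hne
    obtain ⟨y, hyk, hyl⟩ := Set.nonempty_iff_ne_empty.2 hne
    obtain ⟨xk, hxk, hk⟩ := (hH n).2.1 k
    obtain ⟨xl, hxl, hl⟩ := (hH n).2.1 l
    have e1 : H n k = connectedComponentIn ((fd d)^[n] '' T)ᶜ y := by
      rw [hk]
      exact connectedComponentIn_eq (hk ▸ hyk)
    have e2 : H n l = connectedComponentIn ((fd d)^[n] '' T)ᶜ y := by
      rw [hl]
      exact connectedComponentIn_eq (hl ▸ hyl)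
    exact hkl ((hH n).1 (e1.trans e2.symm))
  have hunion : (⋃ k : Fin N, H n k) = ((fd d)^[n] '' T)ᶜ := by
    apply Subset.antisymm
    · intro y hy
      rcases Set.mem_iUnion.1 hy with ⟨k, hk⟩
      obtain ⟨xk, hxk, hkeq⟩ := (hH n).2.1 k
      rw [hkeq] at hk
      exact connectedComponentIn_subset _ _ hk
    · intro y hy
      obtain ⟨k, hk⟩ := (hH n).2.2.1 (connectedComponentIn ((fd d)^[n] '' T)ᶜ y)
        ⟨y, hy, rfl⟩
      exact Set.mem_iUnion.2 ⟨k, hk ▸ mem_connectedComponentIn hy⟩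
  have hvol_union : volume (⋃ k : Fin N, H n k) = ∑ k : Fin N, volume (H n k) := by
    rw [measure_iUnion hdisj hmeas, tsum_fintype]
  have hBmeas : MeasurableSet ((fd d)^[n] '' T) := by
    rw [hBeq]
    exact hfin.isClosed.measurableSet
  have hBnull : volume ((fd d)^[n] '' T) = 0 := by
    rw [hBeq]
    have : B = ⋃ b ∈ B, ({b} : Set S1) := by simp
    rw [this]
    refine measure_biUnion_null_iff (hfin.countable) |>.2 ?_
    intro b _
    exact volume_singleton b
  have hcompl : volume (((fd d)^[n] '' T)ᶜ) = 1 := by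
    rw [measure_compl hBmeas (by
      rw [hBnull]; exact ENNReal.zero_ne_top)]
    rw [hBnull, AddCircle.measure_univ]
    simp
  have key : ∑ k : Fin N, volume (H n k) = 1 := by
    rw [← hvol_union, hunion, hcompl]
  have : ∑ k : Fin N, len (H n k) = (∑ k : Fin N, volume (H n k)).toReal := by
    rw [ENNReal.toReal_sum (fun k _ => hne_top k)]
    rfl
  rw [this, key]
  rfl

variable {εT : ℝ} (hε : 0 < εT) (hε' : εT < 1 / (3 * (d : ℝ) * N))
  (hsmall : ∀ n, len (H n ⟨N - 3, Nat.sub_lt (by omega) (by omega)⟩) < εT)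

include hd hN hε hε' in
lemma epsNd : (N:ℝ) * ((d:ℝ) * εT) < 1/3 ∧ εT < 1/(d:ℝ) := by
  have hd0 : (0:ℝ) < d := by
    have : 0 < d := by omega
    exact_mod_cast this
  have hN0 : (0:ℝ) < N := by
    have : 0 < N := by omega
    exact_mod_cast this
  have h3 : (0:ℝ) < 3 * d * N := by positivity
  constructor
  · have h1 : (N:ℝ) * ((d:ℝ) * εT) < (N:ℝ) * ((d:ℝ) * (1 / (3 * d * N))) := by
      apply mul_lt_mul_of_pos_left _ hN0
      apply mul_lt_mul_of_pos_left hε' hd0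
    calc (N:ℝ) * ((d:ℝ) * εT) < (N:ℝ) * ((d:ℝ) * (1 / (3 * d * N))) := h1
      _ = 1/3 := by field_simp
  · have hN3 : (3:ℝ) ≤ N := by exact_mod_cast hN
    have hd2 : (2:ℝ) ≤ d := by exact_mod_cast hd
    have h1 : (d:ℝ) ≤ 3*d*N := by nlinarith
    calc εT < 1 / (3 * d * N) := hε'
      _ ≤ 1 / d := one_div_le_one_div_of_le hd0 h1

include hd hN hw hH hε hε' hsmall in
lemma small_idx (n : ℕ) (m : Fin N) (hm : (m:ℕ) ≤ N - 3) : len (H n m) < εT := by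
  have hle : m ≤ (⟨N - 3, Nat.sub_lt (by omega) (by omega)⟩ : Fin N) := hm
  exact lt_of_le_of_lt ((hH n).2.2.2 _ _ hle) (hsmall n)

include hd hN hw hH hε hε' hsmall in
lemma sum_contra (n : ℕ) (k l : Fin N) (hkl : k ≠ l) (hlen : len (H n k) = len (H n l))
    (h1 : εT ≤ len (H n k)) (h2 : len (H n k) < (d:ℝ) * εT) : False := by
  have hbig : ∀ m : Fin N, εT ≤ len (H n m) → N - 2 ≤ (m:ℕ) := by
    intro m hm
    by_contra hc
    push_neg at hc
    have : len (H n m) < εT := small_idx (d := d) (T := T) hd hN hw hH hε hε' hsmall n m (by omega)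
    linarith
  have hk2 : N - 2 ≤ (k:ℕ) := hbig k h1
  have hl2 : N - 2 ≤ (l:ℕ) := hbig l (hlen ▸ h1)
  have hkN : (k:ℕ) < N := k.2
  have hlN : (l:ℕ) < N := l.2
  have hvalne : (k:ℕ) ≠ (l:ℕ) := fun h => hkl (Fin.ext h)
  -- one of them has value N-1
  have hmax : ∃ m : Fin N, (m:ℕ) = N - 1 ∧ len (H n m) = len (H n k) := by
    rcases Nat.lt_or_ge (k:ℕ) (N-1) with h | h
    · refine ⟨l, by omega, hlen.symm⟩
    · exact ⟨k, by omega, rfl⟩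
  obtain ⟨m, hmval, hmlen⟩ := hmax
  have hall : ∀ j : Fin N, len (H n j) ≤ len (H n k) := by
    intro j
    rw [← hmlen]
    exact (hH n).2.2.2 j m (by
      show (j:ℕ) ≤ (m:ℕ)
      omega)
  have hsum := sum_len (d := d) (T := T) hN hw hH n
  have hsumle : (1:ℝ) ≤ (N:ℝ) * len (H n k) := by
    rw [← hsum]
    calc ∑ j : Fin N, len (H n j) ≤ ∑ _j : Fin N, len (H n k) :=
          Finset.sum_le_sum (fun j _ => hall j)
      _ = (N:ℝ) * len (H n k) := by
          rw [Finset.sum_const, Finset.card_univ, Fintype.card_fin, nsmul_eq_mul]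
  have hNd := (epsNd hd hN hε hε').1
  have hN0 : (0:ℝ) < N := by
    have : 0 < N := by omega
    exact_mod_cast this
  nlinarith

include hd hN hw hH hor hε hε' hsmall in
lemma tie_aux (F : ℕ) : ∀ (n : ℕ) (k l : Fin N), k ≠ l → len (H n k) = len (H n l) →
    len (H n k) < (d:ℝ) * εT → εT ≤ (d:ℝ)^F * len (H n k) → False := by
  induction F with
  | zero =>
    intro n k l hkl hlen hsm hpow
    rw [pow_zero, one_mul] at hpow
    exact sum_contra hd hN hw hH hε hε' hsmall n k l hkl hlen hpow hsm
  | succ F ih =>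
    intro n k l hkl hlen hsm hpow
    by_cases hc : εT ≤ len (H n k)
    · exact sum_contra hd hN hw hH hε hε' hsmall n k l hkl hlen hc hsm
    · push_neg at hc
      obtain ⟨σ, hσbij, hσ⟩ := step hd hN hw hH hor n
      have hrem_eq : rem d (len (H n k)) = len (H n k) := by
        rw [rem]
        have h1 : (0:ℝ) ≤ (d:ℝ) * len (H n k) := by
          have := (len_pos_lt_one (d := d) (T := T) hN hw hH n k).1
          positivity
        have h2 : (d:ℝ) * len (H n k) < 1 := by
          have hεd := (epsNd hd hN hε hε').2
          have hd0 : (0:ℝ) < d := by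
            have : 0 < d := by omega
            exact_mod_cast this
          have : len (H n k) < 1 / d := lt_trans hc hεd
          calc (d:ℝ) * len (H n k) < (d:ℝ) * (1/d) := by
                exact mul_lt_mul_of_pos_left this hd0
            _ = 1 := by field_simp
        rw [Int.floor_eq_zero_iff.2 ⟨h1, h2⟩]
        simp
      have hrem_eq' : rem d (len (H n l)) = len (H n l) := by
        rw [← hlen, hrem_eq, hlen]
      have hlk := (hσ k).1
      have hll := (hσ l).1
      rw [hrem_eq] at hlk
      rw [hrem_eq'] at hll
      apply ih (n+1) (σ k) (σ l) (fun h => hkl (hσbij.1 h))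
      · rw [hlk, hll, hlen]
      · rw [hlk]
        have hd0 : (0:ℝ) < d := by
          have : 0 < d := by omega
          exact_mod_cast this
        exact (mul_lt_mul_of_pos_left hc hd0)
      · rw [hlk, ← mul_assoc, ← pow_succ]
        exact hpow

include hd hN hw hH hor hε hε' hsmall in
/-- no two distinct holes of controlled size have equal length -/
lemma no_tie (n : ℕ) (k l : Fin N) (hkl : k ≠ l) (hlen : len (H n k) = len (H n l))
    (hsm : len (H n k) < (d:ℝ) * εT) : False := by
  have hpos := (len_pos_lt_one (d := d) (T := T) hN hw hH n k).1
  have hd1 : (1:ℝ) < d := by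
    have : 1 < d := by omega
    exact_mod_cast this
  obtain ⟨F, hF⟩ := pow_unbounded_of_one_lt (εT / len (H n k)) hd1
  apply tie_aux hd hN hw hH hor hε hε' hsmall F n k l hkl hlen hsm
  rw [div_lt_iff₀ hpos] at hF
  linarith

-- remainder lemmas
include hd in
lemma d_mul_rem (s : ℝ) : (d:ℝ) * rem d s = Int.fract ((d:ℝ) * s) := by
  have hd0 : (d:ℝ) ≠ 0 := by
    have : 0 < d := by omega
    positivity
  have hfr : Int.fract ((d:ℝ) * s) = (d:ℝ) * s - (⌊(d:ℝ) * s⌋ : ℤ) := rfl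
  rw [rem, hfr]
  field_simp

include hd in
lemma rem_nonneg (s : ℝ) : 0 ≤ rem d s := by
  have hd0 : (0:ℝ) < d := by
    have : 0 < d := by omega
    exact_mod_cast this
  have h := d_mul_rem (d := d) hd s
  nlinarith [Int.fract_nonneg ((d:ℝ) * s)]

include hd in
lemma rem_lt (s : ℝ) : rem d s < 1/(d:ℝ) := by
  have hd0 : (0:ℝ) < d := by
    have : 0 < d := by omega
    exact_mod_cast this
  have h := d_mul_rem (d := d) hd s
  have h2 := Int.fract_lt_one ((d:ℝ) * s)
  rw [lt_div_iff₀ hd0]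
  nlinarith

include hd in
lemma rem_eq_self {s : ℝ} (h0 : 0 ≤ s) (h1 : s < 1/(d:ℝ)) : rem d s = s := by
  have hd0 : (0:ℝ) < d := by
    have : 0 < d := by omega
    exact_mod_cast this
  rw [rem]
  have hfl : ⌊(d:ℝ) * s⌋ = 0 := by
    apply Int.floor_eq_zero_iff.2
    constructor
    · positivity
    · have := (lt_div_iff₀ hd0).1 h1
      show (d:ℝ) * s < 1
      nlinarith
  rw [hfl]
  simp

-- counting lemmas
lemma count_below {σ : Fin N → Fin N} (hinj : Function.Injective σ) (k : Fin N)
    (S : Finset (Fin N)) (hS : ∀ m ∈ S, ((σ m : ℕ)) < ((σ k : ℕ))) :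
    S.card ≤ ((σ k : ℕ)) := by
  have h1 : (S.image (fun m => ((σ m : ℕ)))).card = S.card :=
    Finset.card_image_of_injOn (fun a _ b _ h => hinj (Fin.ext h))
  have h2 : S.image (fun m => ((σ m : ℕ))) ⊆ Finset.range ((σ k : ℕ)) := by
    intro x hx
    rcases Finset.mem_image.1 hx with ⟨m, hm, rfl⟩
    exact Finset.mem_range.2 (hS m hm)
  calc S.card = (S.image (fun m => ((σ m : ℕ)))).card := h1.symm
    _ ≤ (Finset.range ((σ k : ℕ))).card := Finset.card_le_card h2
    _ = ((σ k : ℕ)) := Finset.card_range _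

lemma count_above {σ : Fin N → Fin N} (hinj : Function.Injective σ) (k : Fin N)
    (S : Finset (Fin N)) (hS : ∀ m ∈ S, ((σ k : ℕ)) < ((σ m : ℕ))) :
    S.card ≤ N - 1 - ((σ k : ℕ)) := by
  have h1 : (S.image (fun m => ((σ m : ℕ)))).card = S.card :=
    Finset.card_image_of_injOn (fun a _ b _ h => hinj (Fin.ext h))
  have h2 : S.image (fun m => ((σ m : ℕ))) ⊆ Finset.Ico ((σ k : ℕ) + 1) N := by
    intro x hx
    rcases Finset.mem_image.1 hx with ⟨m, hm, rfl⟩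
    exact Finset.mem_Ico.2 ⟨hS m hm, (σ m).2⟩
  have h3 : (Finset.Ico ((σ k : ℕ) + 1) N).card = N - ((σ k : ℕ) + 1) := Nat.card_Ico _ _
  have h4 := (σ k).2
  calc S.card = _ := h1.symm
    _ ≤ (Finset.Ico ((σ k : ℕ) + 1) N).card := Finset.card_le_card h2
    _ = N - ((σ k : ℕ) + 1) := h3
    _ ≤ N - 1 - ((σ k : ℕ)) := by omega

include hd hN hw hH hor hε hε' hsmall in
lemma main (i : ℕ) (cr : Fin N) (hcr1 : 1/(d:ℝ) < len (H i cr))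
    (hcr2 : ∀ l : Fin N, 1/(d:ℝ) < len (H i l) → rem d (len (H i cr)) ≤ rem d (len (H i l)))
    (k : Fin N) (hk : (k:ℕ) < N - 2) :
    (Xor'
        (rem d (len (H i cr)) < len (H i k) ∧
          ImageHoleRel (fd d) (H i k) (H (i + 1) ⟨(k : ℕ) + 1, by have := hk; omega⟩))
        (len (H i k) < rem d (len (H i cr)) ∧
          ImageHoleRel (fd d) (H i k) (H (i + 1) k))) ∧
      (rem d (len (H i cr)) < len (H i k) →
        (∃ k' : Fin N, (k' : ℕ) ≤ (k : ℕ) ∧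
          ImageHoleRel (fd d) (H i cr) (H (i + 1) k')) ∧
        rem d (len (H i cr)) < εT) := by
  obtain ⟨σ, hσbij, hσ⟩ := step hd hN hw hH hor i
  have hd0 : (0:ℝ) < d := by
    have : 0 < d := by omega
    exact_mod_cast this
  set r := rem d (len (H i cr)) with hr_def
  have hs_pos : ∀ m : Fin N, 0 < len (H i m) :=
    fun m => (len_pos_lt_one (d := d) (T := T) hN hw hH i m).1
  have hsort : ∀ m m' : Fin N, m ≤ m' → len (H i m) ≤ len (H i m') := (hH i).2.2.2
  have hL : ∀ m : Fin N, len (H (i+1) (σ m)) = (d:ℝ) * rem d (len (H i m)) :=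
    fun m => (hσ m).1
  have hεd1 := (epsNd hd hN hε hε').1
  have hεd2 := (epsNd hd hN hε hε').2
  have hsm : ∀ m : Fin N, (m:ℕ) ≤ N-3 → len (H i m) < εT :=
    fun m hm => small_idx (d := d) (T := T) hd hN hw hH hε hε' hsmall i m hm
  have hkval : (k:ℕ) ≤ N - 3 := by omega
  have hsk_small : len (H i k) < εT := hsm k hkval
  have hcr_big : N - 2 ≤ (cr:ℕ) := by
    by_contra hc
    push_neg at hc
    have h1 := hsm cr (by omega)
    linarith
  have hkcr : k ≠ cr := by
    intro h
    rw [h] at hk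
    omega
  -- the other big index
  set b : Fin N := if (cr:ℕ) = N-1 then ⟨N-2, by omega⟩ else ⟨N-1, by omega⟩ with hb_def
  have hb_val : ((cr:ℕ) = N-1 ∧ (b:ℕ) = N-2) ∨ ((cr:ℕ) = N-2 ∧ (b:ℕ) = N-1) := by
    by_cases hc : (cr:ℕ) = N-1
    · left
      refine ⟨hc, ?_⟩
      rw [hb_def, if_pos hc]
    · right
      have hcrN := cr.2
      refine ⟨by omega, ?_⟩
      rw [hb_def, if_neg hc]
  have hb_big : N - 2 ≤ (b:ℕ) := by rcases hb_val with ⟨_, h⟩ | ⟨_, h⟩ <;> omega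
  have hb_ne_cr : b ≠ cr := by
    intro h
    rcases hb_val with ⟨h1, h2⟩ | ⟨h1, h2⟩ <;> rw [h] at h2 <;> omega
  have hkb : k ≠ b := by
    intro h
    rw [h] at hk
    omega
  -- strictness for small holes
  have hstrict : ∀ m m' : Fin N, m ≠ m' → len (H i m) = len (H i m') →
      len (H i m) < εT → False := by
    intro m m' hne he hlt
    apply no_tie hd hN hw hH hor hε hε' hsmall i m m' hne he
    have hd2 : (2:ℝ) ≤ d := by exact_mod_cast hd
    nlinarith
  have hstrict_lt : ∀ m m' : Fin N, (m:ℕ) < (m':ℕ) → (m':ℕ) ≤ N-3 →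
      len (H i m) < len (H i m') := by
    intro m m' h1 h2
    rcases lt_or_eq_of_le (hsort m m' (by exact le_of_lt h1)) with h | h
    · exact h
    · exact absurd h (fun he => hstrict m m' (fun hmm => by rw [hmm] at h1; omega) he
        (by rw [he]; exact hsm m' h2))
  have hL_small : ∀ m : Fin N, (m:ℕ) ≤ N-3 →
      len (H (i+1) (σ m)) = (d:ℝ) * len (H i m) := by
    intro m hm
    rw [hL m, rem_eq_self hd (le_of_lt (hs_pos m)) (lt_trans (hsm m hm) hεd2)]
  have hLpos : ∀ m : Fin N, 0 < len (H (i+1) (σ m)) :=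
    fun m => (len_pos_lt_one (d := d) (T := T) hN hw hH (i+1) (σ m)).1
  have hr0 : 0 ≤ r := rem_nonneg hd _
  have hr1 : r < 1/(d:ℝ) := rem_lt hd _
  have hLcr : len (H (i+1) (σ cr)) = (d:ℝ) * r := hL cr
  -- r ≠ len (H i k)
  have hrs : r ≠ len (H i k) := by
    intro he
    apply no_tie hd hN hw hH hor hε hε' hsmall (i+1) (σ cr) (σ k)
      (fun h => hkcr (hσbij.1 h).symm)
    · rw [hLcr, hL_small k hkval, he]
    · rw [hLcr, he]
      have hd2 : (2:ℝ) ≤ d := by exact_mod_cast hd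
      nlinarith
  -- order function
  have hord : ∀ m m' : Fin N, len (H (i+1) (σ m)) < len (H (i+1) (σ m')) →
      ((σ m : ℕ)) < ((σ m' : ℕ)) := by
    intro m m' hlt
    by_contra hc
    push_neg at hc
    have hle : σ m' ≤ σ m := hc
    have := (hH (i+1)).2.2.2 (σ m') (σ m) hle
    linarith
  -- sum of image lengths is 1
  have hsum1 : ∑ m : Fin N, len (H (i+1) (σ m)) = 1 := by
    rw [Function.Bijective.sum_comp hσbij (fun j => len (H (i+1) j))]
    exact sum_len (d := d) (T := T) hN hw hH (i+1)
  -- s b cases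
  have hsb_ne : len (H i b) ≠ 1/(d:ℝ) := by
    intro he
    have h1 : rem d (len (H i b)) = 0 := by
      rw [he, rem]
      rw [show (d:ℝ) * (1/d) = 1 by field_simp]
      norm_num
    have h2 := hLpos b
    rw [hL b, h1, mul_zero] at h2
    exact lt_irrefl 0 h2
  have hskb : len (H i k) ≤ len (H i b) := hsort k b (by
    show (k:ℕ) ≤ (b:ℕ)
    omega)
  have hskb_strict : len (H i k) < len (H i b) := by
    rcases lt_or_eq_of_le hskb with h | h
    · exact h
    · exact absurd h (fun he => (hstrict k b hkb he hsk_small))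
  -- KEY : L k < L b
  have hLb : len (H (i+1) (σ k)) < len (H (i+1) (σ b)) := by
    rcases lt_or_ge (len (H i b)) (1/(d:ℝ)) with hsb | hsb
    · -- small b case : L b = d * s b > d * s k = L k
      rw [hL b, rem_eq_self hd (le_of_lt (hs_pos b)) hsb, hL_small k hkval]
      nlinarith
    · have hsb' : 1/(d:ℝ) < len (H i b) := lt_of_le_of_ne hsb (Ne.symm hsb_ne)
      have hrb' := hcr2 b hsb'
      have hrb : r ≤ rem d (len (H i b)) := hrb'
      rcases lt_or_ge r (len (H i k)) with hcase | hcase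
      · -- r < s k : use the sum argument
        have hLk_lt : len (H (i+1) (σ k)) < (d:ℝ) * εT := by
          rw [hL_small k hkval]
          nlinarith
        have hne : len (H (i+1) (σ b)) ≠ len (H (i+1) (σ k)) := by
          intro he
          apply no_tie hd hN hw hH hor hε hε' hsmall (i+1) (σ b) (σ k)
            (fun h => hkb (hσbij.1 h).symm) he
          rw [he]
          exact hLk_lt
        rcases lt_or_ge (len (H (i+1) (σ k))) (len (H (i+1) (σ b))) with h | h
        · exact h
        · exfalso
          have hlb_lt : len (H (i+1) (σ b)) < (d:ℝ) * εT := lt_of_le_of_lt h hLk_lt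
          have hall : ∀ m : Fin N, len (H (i+1) (σ m)) < (d:ℝ) * εT := by
            intro m
            rcases le_or_gt ((m:ℕ)) (N-3) with hm | hm
            · rw [hL_small m hm]
              have h1 := hsm m hm
              have h2 := hs_pos m
              nlinarith
            · have hmcb : m = cr ∨ m = b := by
                have hm2 := m.2
                rcases hb_val with ⟨h1, h2⟩ | ⟨h1, h2⟩
                · rcases (by omega : (m:ℕ) = N-2 ∨ (m:ℕ) = N-1) with h3 | h3
                  · right; exact Fin.ext (by omega)
                  · left; exact Fin.ext (by omega)
                · rcases (by omega : (m:ℕ) = N-2 ∨ (m:ℕ) = N-1) with h3 | h3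
                  · left; exact Fin.ext (by omega)
                  · right; exact Fin.ext (by omega)
              rcases hmcb with rfl | rfl
              · rw [hLcr]
                nlinarith
              · exact hlb_lt
          have hNe : (Finset.univ : Finset (Fin N)).Nonempty :=
            ⟨(⟨0, by omega⟩ : Fin N), Finset.mem_univ _⟩
          have hsum_lt : ∑ m : Fin N, len (H (i+1) (σ m)) <
              ∑ _m : Fin N, (d:ℝ) * εT := by
            apply Finset.sum_lt_sum_of_nonempty
            · exact hNe
            · intro m _
              exact hall m
          rw [hsum1, Finset.sum_const, Finset.card_univ, Fintype.card_fin,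
            nsmul_eq_mul] at hsum_lt
          nlinarith
      · -- s k ≤ r : L b = d rem(s b) ≥ d r > d s k
        have hrk : len (H i k) < r := lt_of_le_of_ne hcase (Ne.symm hrs)
        rw [hL b, hL_small k hkval]
        have : len (H i k) < rem d (len (H i b)) := lt_of_lt_of_le hrk hrb
        nlinarith
  -- counting
  have hIio_card : (Finset.Iio k).card = (k:ℕ) := Fin.card_Iio k
  have hIooN2 : (Finset.Ioo k (⟨N-2, by omega⟩ : Fin N)).card = N - 2 - (k:ℕ) - 1 :=
    Fin.card_Ioo k _
  have hIoo_small : ∀ m ∈ Finset.Ioo k (⟨N-2, by omega⟩ : Fin N),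
      (k:ℕ) < (m:ℕ) ∧ (m:ℕ) ≤ N - 3 := by
    intro m hm
    rw [Finset.mem_Ioo] at hm
    have h1 : (k:ℕ) < (m:ℕ) := hm.1
    have h2 : (m:ℕ) < N - 2 := hm.2
    exact ⟨h1, by omega⟩
  have hb_not_Ioo : b ∉ Finset.Ioo k (⟨N-2, by omega⟩ : Fin N) := by
    intro hmem
    have := (hIoo_small b hmem).2
    omega
  have hcr_not_Ioo : cr ∉ Finset.Ioo k (⟨N-2, by omega⟩ : Fin N) := by
    intro hmem
    have := (hIoo_small cr hmem).2
    omega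
  have hcr_not_Iio : cr ∉ Finset.Iio k := by
    intro hmem
    rw [Finset.mem_Iio] at hmem
    have : (cr:ℕ) < (k:ℕ) := hmem
    omega
  have hIio_below : ∀ m ∈ Finset.Iio k, ((σ m : ℕ)) < ((σ k : ℕ)) := by
    intro m hm
    rw [Finset.mem_Iio] at hm
    apply hord
    rw [hL_small m (by
      have : (m:ℕ) < (k:ℕ) := hm
      omega), hL_small k hkval]
    have := hstrict_lt m k hm hkval
    nlinarith
  have hIoo_above : ∀ m ∈ Finset.Ioo k (⟨N-2, by omega⟩ : Fin N),
      ((σ k : ℕ)) < ((σ m : ℕ)) := by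
    intro m hm
    obtain ⟨h1, h2⟩ := hIoo_small m hm
    apply hord
    rw [hL_small m h2, hL_small k hkval]
    have := hstrict_lt k m h1 h2
    nlinarith
  have hb_above : ((σ k : ℕ)) < ((σ b : ℕ)) := hord k b hLb
  -- THE DICHOTOMY
  rcases lt_or_ge r (len (H i k)) with hcase | hcase
  · -- case r < s k : σ k = k+1 and σ cr ≤ k
    have hLcr_lt : len (H (i+1) (σ cr)) < len (H (i+1) (σ k)) := by
      rw [hLcr, hL_small k hkval]
      nlinarith
    have hcr_below : ((σ cr : ℕ)) < ((σ k : ℕ)) := hord cr k hLcr_lt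
    -- lower bound
    have hlow : (k:ℕ) + 1 ≤ ((σ k : ℕ)) := by
      have hcard : (insert cr (Finset.Iio k)).card = (k:ℕ) + 1 := by
        rw [Finset.card_insert_of_notMem hcr_not_Iio, hIio_card]
      rw [← hcard]
      apply count_below hσbij.1 k
      intro m hm
      rcases Finset.mem_insert.1 hm with h | hm
      · rw [h]; exact hcr_below
      · exact hIio_below m hm
    -- upper bound
    have hup : ((σ k : ℕ)) ≤ (k:ℕ) + 1 := by
      have hcard : (insert b (Finset.Ioo k (⟨N-2, by omega⟩ : Fin N))).card
          = N - 2 - (k:ℕ) := by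
        rw [Finset.card_insert_of_notMem hb_not_Ioo, hIooN2]
        omega
      have hcount := count_above hσbij.1 k
        (insert b (Finset.Ioo k (⟨N-2, by omega⟩ : Fin N))) (by
          intro m hm
          rcases Finset.mem_insert.1 hm with h | hm
          · rw [h]; exact hb_above
          · exact hIoo_above m hm)
      rw [hcard] at hcount
      have hσkN := (σ k).2
      omega
    have hσk : σ k = (⟨(k:ℕ) + 1, by omega⟩ : Fin N) := Fin.ext (by
      show ((σ k : ℕ)) = (k:ℕ) + 1
      omega)
    -- σ cr ≤ k
    have hIcc_card : (Finset.Icc k (⟨N-3, by omega⟩ : Fin N)).card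
        = N - 3 + 1 - (k:ℕ) := Fin.card_Icc k _
    have hb_not_Icc : b ∉ Finset.Icc k (⟨N-3, by omega⟩ : Fin N) := by
      intro hmem
      rw [Finset.mem_Icc] at hmem
      have : (b:ℕ) ≤ N-3 := hmem.2
      omega
    have hcr_up : ((σ cr : ℕ)) ≤ (k:ℕ) := by
      have hcard : (insert b (Finset.Icc k (⟨N-3, by omega⟩ : Fin N))).card
          = N - 1 - (k:ℕ) := by
        rw [Finset.card_insert_of_notMem hb_not_Icc, hIcc_card]
        omega
      have hcount := count_above hσbij.1 cr
        (insert b (Finset.Icc k (⟨N-3, by omega⟩ : Fin N))) (by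
          intro m hm
          rcases Finset.mem_insert.1 hm with h | hm
          · rw [h]; exact hord cr b (lt_trans hLcr_lt hLb)
          · rw [Finset.mem_Icc] at hm
            apply hord
            rw [hLcr, hL_small m (hm.2)]
            have h1 : len (H i k) ≤ len (H i m) := hsort k m hm.1
            nlinarith)
      rw [hcard] at hcount
      have hσcrN := (σ cr).2
      omega
    constructor
    · left
      constructor
      · refine ⟨hcase, ?_⟩
        have hrel := (hσ k).2
        rw [hσk] at hrel
        exact hrel
      · rintro ⟨h1, -⟩
        linarith
    · intro _
      exact ⟨⟨σ cr, hcr_up, (hσ cr).2⟩, lt_trans hcase hsk_small⟩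
  · -- case s k < r : σ k = k
    have hrk : len (H i k) < r := lt_of_le_of_ne hcase (Ne.symm hrs)
    have hLcr_gt : len (H (i+1) (σ k)) < len (H (i+1) (σ cr)) := by
      rw [hLcr, hL_small k hkval]
      nlinarith
    have hlow : (k:ℕ) ≤ ((σ k : ℕ)) := by
      rw [← hIio_card]
      exact count_below hσbij.1 k (Finset.Iio k) hIio_below
    have hup : ((σ k : ℕ)) ≤ (k:ℕ) := by
      have hcr_not : cr ∉ insert b (Finset.Ioo k (⟨N-2, by omega⟩ : Fin N)) := by
        intro hmem
        rcases Finset.mem_insert.1 hmem with h | h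
        · exact hb_ne_cr h.symm
        · exact hcr_not_Ioo h
      have hcard : (insert cr (insert b (Finset.Ioo k (⟨N-2, by omega⟩ : Fin N)))).card
          = N - 1 - (k:ℕ) := by
        rw [Finset.card_insert_of_notMem hcr_not,
          Finset.card_insert_of_notMem hb_not_Ioo, hIooN2]
        omega
      have hcount := count_above hσbij.1 k
        (insert cr (insert b (Finset.Ioo k (⟨N-2, by omega⟩ : Fin N)))) (by
          intro m hm
          rcases Finset.mem_insert.1 hm with h | hm
          · rw [h]; exact hord k cr hLcr_gt
          · rcases Finset.mem_insert.1 hm with h | hm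
            · rw [h]; exact hb_above
            · exact hIoo_above m hm)
      rw [hcard] at hcount
      have hσkN := (σ k).2
      omega
    have hσk : σ k = k := Fin.ext (by
      show ((σ k : ℕ)) = (k:ℕ)
      omega)
    constructor
    · right
      constructor
      · refine ⟨hrk, ?_⟩
        have hrel := (hσ k).2
        rw [hσk] at hrel
        exact hrel
      · rintro ⟨h1, -⟩
        linarith
    · intro hcon
      linarith

end Machinery
end Wk

/-- the image-hole dichotomy for the N-2 smallest holes of T_i.
Here cr is the critical-hole index: len(H_cr) > 1/d and its remainder is minimal
among holes of length > 1/d.  (0-based indices: 1-based k ∈ {1,…,N-2} ↔ (k:ℕ) < N-2;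
"one of the k smallest holes" ↔ index ≤ (k:ℕ).) -/
theorem stmt14 (d N i : ℕ) (hd : 2 ≤ d) (hN : 3 ≤ N) (T : Set S1)
    (hw : Wandering d N T)
    (H : ℕ → Fin N → Set S1)
    (hH : ∀ n, IsHoleEnum ((fd d)^[n] '' T) (H n))
    (hor : ∀ n, OrientPresOn (fd d) ((fd d)^[n] '' T))
    (εT : ℝ) (hε : 0 < εT) (hε' : εT < 1 / (3 * (d : ℝ) * N))
    (hsmall : ∀ n, len (H n ⟨N - 3, by omega⟩) < εT)
    (cr : Fin N)
    (hcr1 : 1 / (d : ℝ) < len (H i cr))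
    (hcr2 : ∀ l : Fin N, 1 / (d : ℝ) < len (H i l) →
      rem d (len (H i cr)) ≤ rem d (len (H i l))) :
    ∀ k : Fin N, (hk : (k : ℕ) < N - 2) →
      (Xor'
        (rem d (len (H i cr)) < len (H i k) ∧
          ImageHoleRel (fd d) (H i k) (H (i + 1) ⟨(k : ℕ) + 1, by omega⟩))
        (len (H i k) < rem d (len (H i cr)) ∧
          ImageHoleRel (fd d) (H i k) (H (i + 1) k))) ∧
      (rem d (len (H i cr)) < len (H i k) →
        (∃ k' : Fin N, (k' : ℕ) ≤ (k : ℕ) ∧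
          ImageHoleRel (fd d) (H i cr) (H (i + 1) k')) ∧
        rem d (len (H i cr)) < εT) := by
  intro k hk
  exact Wk.main hd hN (fun n => (hw n n).1) hH hor hε hε' hsmall i cr hcr1 hcr2 k hk
end
end
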